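/- arXiv:1407.0844 — 7 statements merged into one kernel-verified Lean document; each statement's English description precedes it below -/
import Mathlib

section
/- Let k be an algebraically closed field of characteristic zero, Γ a group, and Γ₀ a normal subgroup of Γ such that the quotient Γ/Γ₀ is a finite cyclic group. Let ρ₀ be an irreducible representation of Γ₀ on a finite-dimensional k-vector space V such that the conjugate representation ρ₀^s, defined by ρ₀^s(g) = ρ₀(s g s⁻¹), is isomorphic to ρ₀ for every s ∈ Γ. Then ρ₀ extends to a representation of Γ on V, i.e. there exists a representation ρ̃ of Γ on V whose restriction to Γ₀ equals ρ₀. -/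
/-- A representation is irreducible if its space is nonzero and the only invariant
subspaces are `⊥` and `⊤`. -/
def RepIrreducible {k Γ V : Type*} [CommSemiring k] [Monoid Γ] [AddCommMonoid V]
    [Module k V] (ρ : Representation k Γ V) : Prop :=
  Nontrivial V ∧ ∀ p : Submodule k V, (∀ g : Γ, ∀ v ∈ p, ρ g v ∈ p) → p = ⊥ ∨ p = ⊤

/-- Isomorphism of representations: a `k`-linear equivalence intertwining the actions. -/
def RepIso {k Γ V W : Type*} [CommSemiring k] [Monoid Γ] [AddCommMonoid V] [Module k V]
    [AddCommMonoid W] [Module k W] (ρ : Representation k Γ V)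
    (σ : Representation k Γ W) : Prop :=
  ∃ e : V ≃ₗ[k] W, ∀ (g : Γ) (v : V), e (ρ g v) = σ g (e v)

/-- Conjugation by `s ∈ Γ` as an endomorphism of a normal subgroup `Γ₀`. -/
def conjHom {Γ : Type*} [Group Γ] (Γ₀ : Subgroup Γ) [hN : Γ₀.Normal] (s : Γ) :
    Γ₀ →* Γ₀ where
  toFun g := ⟨s * (g : Γ) * s⁻¹, hN.conj_mem (g : Γ) g.2 s⟩
  map_one' := by ext; push_cast; group
  map_mul' g h := by ext; push_cast; group

/-- The conjugate representation `ρ₀ˢ` of a representation `ρ₀` of a normal subgroup `Γ₀`,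
defined by `ρ₀ˢ(g) = ρ₀(s g s⁻¹)`. -/
def conjRep {k Γ V : Type*} [CommSemiring k] [Group Γ] [AddCommMonoid V] [Module k V]
    (Γ₀ : Subgroup Γ) [Γ₀.Normal] (s : Γ) (ρ₀ : Representation k Γ₀ V) :
    Representation k Γ₀ V :=
  MonoidHom.comp ρ₀ (conjHom Γ₀ s)

/-- Schur: an endomorphism commuting with an irreducible rep is scalar. -/
lemma schur_scalar {k Γ₀ V : Type*} [Field k] [IsAlgClosed k] [Monoid Γ₀]
    [AddCommGroup V] [Module k V] [FiniteDimensional k V]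
    (ρ : Representation k Γ₀ V) (hirr : RepIrreducible ρ)
    (A : V →ₗ[k] V) (hA : ∀ g : Γ₀, A * ρ g = ρ g * A) :
    ∃ c : k, A = c • (1 : V →ₗ[k] V) := by
  haveI : Nontrivial V := hirr.1
  obtain ⟨c, hc⟩ := Module.End.exists_eigenvalue A
  refine ⟨c, ?_⟩
  have hinv : ∀ g : Γ₀, ∀ v ∈ LinearMap.ker (A - c • (1 : V →ₗ[k] V)), ρ g v ∈ LinearMap.ker (A - c • (1 : V →ₗ[k] V)) := by
    intro g v hv
    rw [LinearMap.mem_ker] at hv ⊢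
    have h1 : A (ρ g v) = ρ g (A v) := congrFun (congrArg DFunLike.coe (hA g)) v
    simp only [LinearMap.sub_apply, LinearMap.smul_apply, Module.End.one_apply] at hv ⊢
    rw [h1, ← map_smul]
    rw [sub_eq_zero] at hv ⊢
    rw [hv]
  rcases hirr.2 _ hinv with h | h
  · exfalso
    obtain ⟨v, hv⟩ := hc.exists_hasEigenvector
    have : v ∈ LinearMap.ker (A - c • (1 : V →ₗ[k] V)) := by
      rw [LinearMap.mem_ker]
      simp [hv.apply_eq_smul, sub_eq_zero]
    rw [h, Submodule.mem_bot] at this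
    exact hv.2 this
  · have : A - c • (1 : V →ₗ[k] V) = 0 := LinearMap.ker_eq_top.mp h
    rw [sub_eq_zero] at this; exact this

lemma conjHom_one' {Γ : Type*} [Group Γ] (Γ₀ : Subgroup Γ) [Γ₀.Normal] (g : Γ₀) :
    conjHom Γ₀ 1 g = g := by
  ext; simp [conjHom]

lemma conjHom_comp' {Γ : Type*} [Group Γ] (Γ₀ : Subgroup Γ) [Γ₀.Normal] (s t : Γ) (g : Γ₀) :
    conjHom Γ₀ s (conjHom Γ₀ t g) = conjHom Γ₀ (s * t) g := by
  ext; simp [conjHom]; group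

/-- conjugation relation extended to integer powers -/
lemma conj_zpow_rel {Γ G : Type*} [Group Γ] [Group G] (Γ₀ : Subgroup Γ) [Γ₀.Normal]
    (φ : Γ₀ →* G) (s : Γ) (T : G)
    (h : ∀ g : Γ₀, T * φ g * T⁻¹ = φ (conjHom Γ₀ s g)) (i : ℤ) (g : Γ₀) :
    T ^ i * φ g * T ^ (-i) = φ (conjHom Γ₀ (s ^ i) g) := by
  have hinv : ∀ g : Γ₀, T⁻¹ * φ g * T = φ (conjHom Γ₀ s⁻¹ g) := by
    intro g
    have := h (conjHom Γ₀ s⁻¹ g)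
    rw [conjHom_comp', mul_inv_cancel, conjHom_one'] at this
    rw [← this]; group
  induction i using Int.induction_on with
  | zero => simp [conjHom_one']
  | succ i ih =>
      have e1 : T ^ ((i : ℤ) + 1) * φ g * T ^ (-((i : ℤ) + 1))
          = T * (T ^ (i : ℤ) * φ g * T ^ (-(i : ℤ))) * T⁻¹ := by group
      rw [e1, ih, h, conjHom_comp']
      congr 2
      rw [show ((i : ℤ) + 1) = 1 + (i : ℤ) by ring, zpow_one_add]
  | pred i ih =>
      have e1 : T ^ (-(i : ℤ) - 1) * φ g * T ^ (-(-(i : ℤ) - 1))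
          = T⁻¹ * (T ^ (-(i : ℤ)) * φ g * T ^ (-(-(i : ℤ)))) * T := by group
      rw [e1, ih, hinv, conjHom_comp']
      congr 2
      rw [show (-(i : ℤ) - 1) = (-1) + (-(i : ℤ)) by ring, zpow_add, zpow_neg_one]

/-- Let `k` be an algebraically closed field of characteristic zero, `Γ₀` a normal
subgroup of `Γ` with finite cyclic quotient `Γ/Γ₀`, and `ρ₀` an irreducible representation
of `Γ₀` on a finite-dimensional space `V` all of whose conjugates `ρ₀ˢ` (for `s ∈ Γ`) are
isomorphic to `ρ₀`.  Then `ρ₀` extends to a representation of `Γ` on `V`. -/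

theorem stmt3 {k : Type} [Field k] [IsAlgClosed k] [CharZero k]
    {Γ : Type} [Group Γ] {V : Type} [AddCommGroup V] [Module k V] [FiniteDimensional k V]
    (Γ₀ : Subgroup Γ) [Γ₀.Normal] [Finite (Γ ⧸ Γ₀)] [IsCyclic (Γ ⧸ Γ₀)]
    (ρ₀ : Representation k Γ₀ V) (hirr : RepIrreducible ρ₀)
    (hconj : ∀ s : Γ, RepIso (conjRep Γ₀ s ρ₀) ρ₀) :
    ∃ ρext : Representation k Γ V, ∀ g : Γ₀, ρext (g : Γ) = ρ₀ g := by
  classical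
  haveI : Nontrivial V := hirr.1
  set n : ℕ := Nat.card (Γ ⧸ Γ₀) with hn
  have hnpos : 0 < n := Nat.card_pos
  obtain ⟨q, hq⟩ := IsCyclic.exists_generator (α := Γ ⧸ Γ₀)
  obtain ⟨s, hs⟩ := QuotientGroup.mk'_surjective Γ₀ q
  set R : Γ₀ →* (V →ₗ[k] V)ˣ := ρ₀.asGroupHom with hR
  have hRval : ∀ g : Γ₀, ((R g : (V →ₗ[k] V)ˣ) : V →ₗ[k] V) = ρ₀ g :=
    fun g => ρ₀.asGroupHom_apply g
  obtain ⟨e, he⟩ := hconj s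
  -- the basic intertwiner, as a unit
  set T₀ : (V →ₗ[k] V)ˣ :=
    ⟨e.symm.toLinearMap, e.toLinearMap,
      by ext v; simp, by ext v; simp⟩ with hT₀def
  have hT₀ : ∀ g : Γ₀, T₀ * R g * T₀⁻¹ = R (conjHom Γ₀ s g) := by
    intro g
    rw [mul_inv_eq_iff_eq_mul]
    apply Units.ext
    simp only [Units.val_mul, hRval]
    ext v
    have := he g (e.symm v)
    simp only [conjRep, MonoidHom.comp_apply, LinearEquiv.apply_symm_apply] at this
    simpa [hT₀def] using congrArg e.symm this.symm
  -- order facts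
  have hordq : orderOf q = n := orderOf_eq_card_of_forall_mem_zpowers hq
  have hqd : ∀ d : ℤ, q ^ d = 1 ↔ (n : ℤ) ∣ d := by
    intro d
    rw [← orderOf_dvd_iff_zpow_eq_one, hordq]
  -- s^n ∈ Γ₀
  have hσmem : s ^ n ∈ Γ₀ := by
    have : QuotientGroup.mk' Γ₀ (s ^ n) = 1 := by
      rw [map_pow, hs, ← hordq, pow_orderOf_eq_one]
    rwa [← QuotientGroup.eq_one_iff]
  set σ : Γ₀ := ⟨s ^ n, hσmem⟩ with hσ
  -- key integer-power conjugation relation for T₀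
  have key₀ : ∀ (i : ℤ) (g : Γ₀),
      T₀ ^ i * R g * T₀ ^ (-i) = R (conjHom Γ₀ (s ^ i) g) :=
    conj_zpow_rel Γ₀ R s T₀ hT₀
  -- A commutes with the representation
  set A : (V →ₗ[k] V)ˣ := (R σ)⁻¹ * T₀ ^ (n : ℤ) with hA
  have hAcomm : ∀ g : Γ₀, (A : V →ₗ[k] V) * ρ₀ g = ρ₀ g * (A : V →ₗ[k] V) := by
    intro g
    have h1 := key₀ (n : ℤ) g
    have hconjσ : conjHom Γ₀ (s ^ (n : ℤ)) g = σ * g * σ⁻¹ := by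
      ext
      simp [conjHom, hσ, zpow_natCast]
    rw [hconjσ, map_mul, map_mul, map_inv] at h1
    -- h1 : T₀^n * R g * T₀^(-n) = R σ * R g * (R σ)⁻¹
    have h2 : A * R g = R g * A := by
      rw [hA]
      have : T₀ ^ (n : ℤ) * R g = R σ * R g * (R σ)⁻¹ * T₀ ^ (n : ℤ) := by
        rw [← h1]; group
      rw [mul_assoc, this]
      group
    have := congrArg (Units.val) h2
    simpa [hRval] using this
  -- Schur : A is a nonzero scalar
  obtain ⟨c, hc⟩ := schur_scalar ρ₀ hirr (A : V →ₗ[k] V) hAcomm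
  have hcne : c ≠ 0 := by
    intro h0
    have : (A : V →ₗ[k] V) * ((A⁻¹ : (V →ₗ[k] V)ˣ) : V →ₗ[k] V) = 1 := by
      rw [← Units.val_mul, mul_inv_cancel, Units.val_one]
    rw [hc, h0] at this
    simp at this
  -- choose an n-th root of c⁻¹
  obtain ⟨μ, hμ⟩ := IsAlgClosed.exists_pow_nat_eq (c⁻¹) hnpos
  have hμne : μ ≠ 0 := by
    intro h0
    rw [h0, zero_pow hnpos.ne'] at hμ
    exact inv_ne_zero hcne hμ.symm
  -- the scalar unit
  set u : (V →ₗ[k] V)ˣ :=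
    ⟨μ • (1 : V →ₗ[k] V), μ⁻¹ • (1 : V →ₗ[k] V),
      by ext v; simp [smul_smul, mul_inv_cancel₀ hμne, inv_mul_cancel₀ hμne],
      by ext v; simp [smul_smul, mul_inv_cancel₀ hμne, inv_mul_cancel₀ hμne]⟩ with hu
  have hucentral : ∀ x : (V →ₗ[k] V)ˣ, u * x = x * u := by
    intro x
    apply Units.ext
    ext v
    simp [hu, Units.val_mul]
  -- the corrected intertwiner
  set T : (V →ₗ[k] V)ˣ := u * T₀ with hT
  have hTconj : ∀ g : Γ₀, T * R g * T⁻¹ = R (conjHom Γ₀ s g) := by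
    intro g
    rw [hT, ← hT₀ g, mul_inv_rev]
    have := hucentral (R g)
    calc u * T₀ * R g * (T₀⁻¹ * u⁻¹) = u * (T₀ * R g * T₀⁻¹) * u⁻¹ := by group
      _ = (T₀ * R g * T₀⁻¹) * (u * u⁻¹) := by rw [hucentral (T₀ * R g * T₀⁻¹)]; group
      _ = T₀ * R g * T₀⁻¹ := by group
  have key : ∀ (i : ℤ) (g : Γ₀),
      T ^ i * R g * T ^ (-i) = R (conjHom Γ₀ (s ^ i) g) :=
    conj_zpow_rel Γ₀ R s T hTconj
  -- T^n = R σ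
  have hTn : T ^ (n : ℤ) = R σ := by
    apply Units.ext
    have hcomm : Commute u T₀ := hucentral T₀
    have h1 : T ^ (n : ℤ) = u ^ (n : ℤ) * T₀ ^ (n : ℤ) := by
      rw [hT]
      exact hcomm.mul_zpow (n : ℤ)
    have h2 : T₀ ^ (n : ℤ) = R σ * A := by rw [hA]; group
    rw [h1, h2]
    have hun : ((u ^ (n : ℤ) : (V →ₗ[k] V)ˣ) : V →ₗ[k] V) = c⁻¹ • 1 := by
      rw [zpow_natCast, ← hμ]
      rw [Units.val_pow_eq_pow_val]
      show (μ • (1 : V →ₗ[k] V)) ^ n = (μ ^ n) • 1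
      rw [smul_pow, one_pow]
    rw [Units.val_mul, Units.val_mul, hun, hc]
    ext v
    simp [hRval, smul_smul, mul_inv_cancel₀ hcne]
  have hTnm : ∀ m : ℤ, T ^ ((n : ℤ) * m) = R (σ ^ m) := by
    intro m
    rw [zpow_mul, hTn, ← map_zpow]
  -- choice of exponents
  have hιex : ∀ γ : Γ, ∃ i : ℤ, QuotientGroup.mk' Γ₀ γ = q ^ i := by
    intro γ
    obtain ⟨i, hi⟩ := Subgroup.mem_zpowers_iff.mp (hq (QuotientGroup.mk' Γ₀ γ))
    exact ⟨i, hi.symm⟩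
  choose ι hι using hιex
  have memF : ∀ (γ : Γ) (i : ℤ), QuotientGroup.mk' Γ₀ γ = q ^ i →
      γ * (s ^ i)⁻¹ ∈ Γ₀ := by
    intro γ i h
    rw [← QuotientGroup.eq_one_iff (N := Γ₀)]
    have : QuotientGroup.mk' Γ₀ (γ * (s ^ i)⁻¹) = q ^ i * (q ^ i)⁻¹ := by
      rw [map_mul, map_inv, map_zpow, hs, h]
    show QuotientGroup.mk' Γ₀ (γ * (s ^ i)⁻¹) = 1
    rw [this]
    simp
  set F : Γ → (V →ₗ[k] V)ˣ :=
    fun γ => R ⟨γ * (s ^ ι γ)⁻¹, memF γ (ι γ) (hι γ)⟩ * T ^ (ι γ) with hF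
  have WD : ∀ (γ : Γ) (i : ℤ) (h : QuotientGroup.mk' Γ₀ γ = q ^ i),
      F γ = R ⟨γ * (s ^ i)⁻¹, memF γ i h⟩ * T ^ i := by
    intro γ i h
    have hdvd : (n : ℤ) ∣ i - ι γ := by
      rw [← hqd]
      rw [zpow_sub, ← h, ← hι γ]
      simp
    obtain ⟨m, hm⟩ := hdvd
    have hij : i = ι γ + (n : ℤ) * m := by linarith
    have hx : (⟨γ * (s ^ i)⁻¹, memF γ i h⟩ : Γ₀)
        = ⟨γ * (s ^ ι γ)⁻¹, memF γ (ι γ) (hι γ)⟩ * (σ ^ m)⁻¹ := by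
      apply Subtype.ext
      push_cast [hσ]
      rw [hij, zpow_add, zpow_mul, zpow_natCast]
      group
    rw [hF]
    rw [hx, map_mul, map_inv, ← hTnm m]
    have hTj : T ^ (ι γ) = (T ^ ((n : ℤ) * m))⁻¹ * T ^ i := by
      rw [← zpow_neg, ← zpow_add]
      congr 1
      linarith
    beta_reduce
    rw [hTj]
    group
  -- multiplicativity
  have Fmul : ∀ a b : Γ, F (a * b) = F a * F b := by
    intro a b
    have hab : QuotientGroup.mk' Γ₀ (a * b) = q ^ (ι a + ι b) := by
      rw [map_mul, hι a, hι b, zpow_add]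
    rw [WD (a * b) (ι a + ι b) hab, hF]
    have hk := key (ι a) ⟨b * (s ^ ι b)⁻¹, memF b (ι b) (hι b)⟩
    have hk' : T ^ (ι a) * R ⟨b * (s ^ ι b)⁻¹, memF b (ι b) (hι b)⟩
        = R (conjHom Γ₀ (s ^ ι a) ⟨b * (s ^ ι b)⁻¹, memF b (ι b) (hι b)⟩) * T ^ (ι a) := by
      rw [← hk]; group
    have hx : (⟨a * b * (s ^ (ι a + ι b))⁻¹, memF (a * b) (ι a + ι b) hab⟩ : Γ₀)
        = ⟨a * (s ^ ι a)⁻¹, memF a (ι a) (hι a)⟩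
          * conjHom Γ₀ (s ^ ι a) ⟨b * (s ^ ι b)⁻¹, memF b (ι b) (hι b)⟩ := by
      apply Subtype.ext
      simp only [conjHom, MonoidHom.coe_mk, OneHom.coe_mk, Subgroup.coe_mul]
      rw [zpow_add]
      group
    rw [hx, map_mul]
    calc R ⟨a * (s ^ ι a)⁻¹, memF a (ι a) (hι a)⟩
          * R (conjHom Γ₀ (s ^ ι a) ⟨b * (s ^ ι b)⁻¹, memF b (ι b) (hι b)⟩)
          * T ^ (ι a + ι b)
        = R ⟨a * (s ^ ι a)⁻¹, memF a (ι a) (hι a)⟩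
          * (R (conjHom Γ₀ (s ^ ι a) ⟨b * (s ^ ι b)⁻¹, memF b (ι b) (hι b)⟩) * T ^ (ι a))
          * T ^ (ι b) := by rw [zpow_add]; group
      _ = R ⟨a * (s ^ ι a)⁻¹, memF a (ι a) (hι a)⟩
          * (T ^ (ι a) * R ⟨b * (s ^ ι b)⁻¹, memF b (ι b) (hι b)⟩) * T ^ (ι b) := by
            rw [hk']
      _ = R ⟨a * (s ^ ι a)⁻¹, memF a (ι a) (hι a)⟩ * T ^ (ι a)
          * (R ⟨b * (s ^ ι b)⁻¹, memF b (ι b) (hι b)⟩ * T ^ (ι b)) := by group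
  have Fone : F 1 = 1 := by
    have h1 : QuotientGroup.mk' Γ₀ (1 : Γ) = q ^ (0 : ℤ) := by simp
    rw [WD 1 0 h1]
    have : (⟨(1 : Γ) * (s ^ (0 : ℤ))⁻¹, memF 1 0 h1⟩ : Γ₀) = 1 := by
      apply Subtype.ext; simp
    rw [this, map_one, zpow_zero, mul_one]
  refine ⟨(Units.coeHom (V →ₗ[k] V)).comp ⟨⟨F, Fone⟩, Fmul⟩, ?_⟩
  intro g
  have h0 : QuotientGroup.mk' Γ₀ (g : Γ) = q ^ (0 : ℤ) := by
    rw [zpow_zero]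
    exact (QuotientGroup.eq_one_iff _).mpr g.2
  have := WD (g : Γ) 0 h0
  have hg : (⟨(g : Γ) * (s ^ (0 : ℤ))⁻¹, memF (g : Γ) 0 h0⟩ : Γ₀) = g := by
    apply Subtype.ext; simp
  rw [hg, zpow_zero, mul_one] at this
  show ((F (g : Γ) : (V →ₗ[k] V)ˣ) : V →ₗ[k] V) = ρ₀ g
  rw [this, hRval]
end

section
/- Let (R, m, k) be a commutative Noetherian local ring with residue field k = R/m, and let P be a bounded cochain complex of finitely generated free R-modules. If the complex P ⊗_R k of k-vector spaces obtained by applying − ⊗_R k degreewise is exact, then P itself is exact. -/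
open CategoryTheory CategoryTheory.Limits CategoryTheory.MonoidalCategory

section Aux
open IsLocalRing TensorProduct

lemma aux_tensor_surj {R : Type} [CommRing R] [IsLocalRing R] {M : Type} [AddCommGroup M] [Module R M]
    (w : M ⊗[R] ResidueField R) : ∃ x : M, x ⊗ₜ[R] (1 : ResidueField R) = w := by
  induction w using TensorProduct.induction_on with
  | zero => exact ⟨0, by simp⟩
  | tmul x r =>
    obtain ⟨r, rfl⟩ := Ideal.Quotient.mk_surjective (I := maximalIdeal R) r
    refine ⟨r • x, ?_⟩
    rw [smul_tmul]
    congr 1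
    exact (Submodule.Quotient.mk_smul (maximalIdeal R) r (1 : R)).symm ▸ (by simp; rfl)
  | add a b ha hb =>
    obtain ⟨x, rfl⟩ := ha; obtain ⟨y, rfl⟩ := hb
    exact ⟨x + y, by rw [add_tmul]⟩

lemma aux_tmul_eq_zero {R : Type} [CommRing R] [IsLocalRing R] {M : Type} [AddCommGroup M] [Module R M]
    (x : M) (h : x ⊗ₜ[R] (1 : ResidueField R) = 0) :
    x ∈ (maximalIdeal R) • (⊤ : Submodule R M) := by
  have h2 := congrArg (tensorQuotEquivQuotSMul M (maximalIdeal R))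
    (show x ⊗ₜ[R] Ideal.Quotient.mk (maximalIdeal R) (1 : R) = (0 : M ⊗[R] (R ⧸ maximalIdeal R)) from h)
  rw [tensorQuotEquivQuotSMul_tmul_mk, map_zero, one_smul,
    Submodule.Quotient.mk_eq_zero] at h2
  exact h2

lemma aux_surj {R : Type} [CommRing R] [IsLocalRing R] {M N : Type} [AddCommGroup M] [Module R M] [AddCommGroup N] [Module R N]
    [Module.Finite R N] (φ : M →ₗ[R] N)
    (h : ∀ z : N, ∃ x : M, z - φ x ∈ (maximalIdeal R) • (⊤ : Submodule R N)) :
    Function.Surjective φ := by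
  rw [← LinearMap.range_eq_top, ← IsLocalRing.map_mkQ_eq_top, Submodule.eq_top_iff']
  intro z
  obtain ⟨z, rfl⟩ := Submodule.mkQ_surjective _ z
  obtain ⟨x, hx⟩ := h z
  refine ⟨φ x, ⟨x, rfl⟩, ?_⟩
  rw [Submodule.mkQ_apply, Submodule.mkQ_apply, eq_comm, Submodule.Quotient.eq]
  exact hx

/-- kernel of the `i`-th differential -/
def ZZ {R : Type} [CommRing R] (P : CochainComplex (ModuleCat R) ℤ) (i : ℤ) :
    Submodule R (P.X i) :=
  LinearMap.ker (P.d i (i + 1)).hom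

/-- invariant: the cycles in degree `i` form a free direct summand -/
def Good {R : Type} [CommRing R] (P : CochainComplex (ModuleCat R) ℤ) (i : ℤ) : Prop :=
  Module.Free R (ZZ P i) ∧
    ∃ π : P.X i →ₗ[R] ZZ P i, ∀ z : ZZ P i, π (z : P.X i) = z

lemma step {R : Type} [CommRing R] [IsNoetherianRing R] [IsLocalRing R]
    (P : CochainComplex (ModuleCat R) ℤ)
    (hfree : ∀ i : ℤ, Module.Free R (P.X i))
    (hfg : ∀ i : ℤ, Module.Finite R (P.X i))
    (hexact : ∀ i : ℤ,
      (((tensorRight (ModuleCat.of R (IsLocalRing.ResidueField R))).mapHomologicalComplex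
        (ComplexShape.up ℤ)).obj P).ExactAt i)
    {i j : ℤ} (hij : i + 1 = j) (hG : Good P j) :
    (∀ z : P.X j, P.d j (j + 1) z = 0 → ∃ x : P.X i, P.d i j x = z) ∧ Good P i := by
  subst hij
  obtain ⟨hGfree, π, hπ⟩ := hG
  haveI := hfg (i + 1)
  haveI : Module.Finite R (ZZ P (i+1)) :=
    Module.Finite.iff_fg.mpr (IsNoetherian.noetherian _)
  -- the corestricted differential
  set φ : P.X i →ₗ[R] ZZ P (i+1) :=
    LinearMap.codRestrict (ZZ P (i+1)) (P.d i (i+1)).hom (fun x =>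
      LinearMap.mem_ker.mpr (DFunLike.congr_fun (congrArg ModuleCat.Hom.hom (P.d_comp_d i (i+1) (i+1+1))) x)) with hφ
  have hφval : ∀ x : P.X i, (φ x : P.X (i+1)) = P.d i (i+1) x := fun x => rfl
  -- exactness of the tensored complex in degree i+1, elementwise
  have hTex : ∀ y : (P.X (i+1)) ⊗[R] ResidueField R,
      (P.d (i+1) (i+1+1)).hom.rTensor (ResidueField R) y = 0 →
      ∃ w : (P.X i) ⊗[R] ResidueField R,
        (P.d i (i+1)).hom.rTensor (ResidueField R) w = y := by
    have h := hexact (i+1)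
    rw [HomologicalComplex.exactAt_iff' _ i (i+1) (i+1+1)
      (by simp) (by simp), ShortComplex.moduleCat_exact_iff] at h
    exact h
  -- surjectivity of φ
  have hsurj : Function.Surjective φ := by
    apply aux_surj
    intro z
    have hz1 : (P.d (i+1) (i+1+1)).hom.rTensor (ResidueField R)
        ((z : P.X (i+1)) ⊗ₜ[R] (1 : ResidueField R)) = 0 := by
      rw [LinearMap.rTensor_tmul]
      have : P.d (i+1) (i+1+1) (z : P.X (i+1)) = 0 := z.2
      rw [this, zero_tmul]
    obtain ⟨w, hw⟩ := hTex _ hz1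
    obtain ⟨x, rfl⟩ := aux_tensor_surj w
    rw [LinearMap.rTensor_tmul] at hw
    have hmem : ((z : P.X (i+1)) - P.d i (i+1) x) ∈
        (maximalIdeal R) • (⊤ : Submodule R (P.X (i+1))) := by
      apply aux_tmul_eq_zero
      rw [sub_tmul, hw, sub_self]
    refine ⟨x, ?_⟩
    -- transfer to m • ⊤ inside ZZ
    have hv : (z - φ x : ZZ P (i+1)) =
        π ((z : P.X (i+1)) - P.d i (i+1) x) := by
      have : ((z - φ x : ZZ P (i+1)) : P.X (i+1))
          = (z : P.X (i+1)) - P.d i (i+1) x := rfl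
      rw [← this, hπ]
    rw [hv]
    have : π ((z : P.X (i+1)) - P.d i (i+1) x) ∈
        Submodule.map π ((maximalIdeal R) • (⊤ : Submodule R (P.X (i+1)))) :=
      Submodule.mem_map_of_mem hmem
    rw [Submodule.map_smul''] at this
    exact Submodule.smul_mono le_rfl le_top this
  constructor
  · intro z hz
    obtain ⟨x, hx⟩ := hsurj ⟨z, hz⟩
    exact ⟨x, congrArg Subtype.val hx⟩
  · -- Good P i
    haveI : Module.Projective R (ZZ P (i+1)) := by
      haveI := hGfree; infer_instance
    obtain ⟨s, hs⟩ := Module.projective_lifting_property φ LinearMap.id hsurj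
    have hsφ : ∀ z : ZZ P (i+1), φ (s z) = z := fun z => DFunLike.congr_fun hs z
    set σ : P.X i →ₗ[R] P.X i := LinearMap.id - s ∘ₗ φ with hσ
    set π' : P.X i →ₗ[R] ZZ P i :=
      LinearMap.codRestrict (ZZ P i) σ (fun x => by
        have h1 : φ (σ x) = 0 := by
          rw [hσ]
          simp only [map_sub, LinearMap.sub_apply, LinearMap.id_apply,
            LinearMap.comp_apply, hsφ, sub_self]
        exact LinearMap.mem_ker.mpr (congrArg Subtype.val h1)) with hπ'
    have hretr : ∀ z : ZZ P i, π' (z : P.X i) = z := by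
      intro z
      apply Subtype.ext
      have h0 : φ (z : P.X i) = 0 := by
        apply Subtype.ext
        exact z.2
      have : (π' (z : P.X i) : P.X i) = (z : P.X i) - s (φ (z : P.X i)) := rfl
      rw [this, h0, map_zero, sub_zero]
    haveI : Module.Projective R (ZZ P i) := by
      haveI := hfree i
      exact Module.Projective.of_split (ZZ P i).subtype π'
        (LinearMap.ext fun z => hretr z)
    haveI : Module.Finite R (ZZ P i) := by
      haveI := hfg i
      exact Module.Finite.iff_fg.mpr (IsNoetherian.noetherian _)
    haveI : Module.FinitePresentation R (ZZ P i) :=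
      Module.finitePresentation_of_finite R _
    haveI : Module.Flat R (ZZ P i) := Module.Flat.of_projective
    exact ⟨Module.free_of_flat_of_isLocalRing, π', hretr⟩

lemma base_good {R : Type} [CommRing R] (P : CochainComplex (ModuleCat R) ℤ)
    (i : ℤ) (h : Subsingleton (P.X i)) : Good P i := by
  haveI := h
  haveI : Subsingleton (ZZ P i) := by
    constructor; intro a b; apply Subtype.ext; exact Subsingleton.elim _ _
  exact ⟨inferInstance, 0, fun z => Subsingleton.elim _ _⟩

end Aux

/-- Let `(R, m, k)` be a commutative Noetherian local ring with residue field `k`, and let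
`P` be a bounded cochain complex of finitely generated free `R`-modules.  If the complex
`P ⊗_R k` (obtained by tensoring degreewise with the residue field) is exact, then `P`
itself is exact. -/
theorem stmt6 {R : Type} [CommRing R] [IsNoetherianRing R] [IsLocalRing R]
    (P : CochainComplex (ModuleCat R) ℤ)
    (hfree : ∀ i : ℤ, Module.Free R (P.X i))
    (hfg : ∀ i : ℤ, Module.Finite R (P.X i))
    (hbdd : ∃ a b : ℤ, ∀ i : ℤ, (i < a ∨ b < i) → Subsingleton (P.X i))
    (hexact : ∀ i : ℤ,
      (((tensorRight (ModuleCat.of R (IsLocalRing.ResidueField R))).mapHomologicalComplex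
        (ComplexShape.up ℤ)).obj P).ExactAt i) :
    ∀ i : ℤ, P.ExactAt i := by
  obtain ⟨a, b, hb⟩ := hbdd
  have good : ∀ i : ℤ, Good P i := by
    have key : ∀ n : ℕ, Good P (b + 1 - n) := by
      intro n
      induction n with
      | zero => exact base_good P _ (hb _ (Or.inr (by omega)))
      | succ n ih =>
        exact (step P hfree hfg hexact
          (show (b + 1 - (n + 1 : ℕ) : ℤ) + 1 = b + 1 - n by push_cast; ring) ih).2
    intro i
    by_cases h : b < i
    · exact base_good P i (hb i (Or.inr h))
    · have hi : i = b + 1 - ((b + 1 - i).toNat : ℤ) := by omega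
      rw [hi]
      exact key _
  intro i
  rw [HomologicalComplex.exactAt_iff' P (i - 1) i (i + 1) (by simp) (by simp),
    ShortComplex.moduleCat_exact_iff]
  intro x₂ hx₂
  exact (step P hfree hfg hexact (show (i - 1) + 1 = i by ring) (good i)).1 x₂ hx₂
end

section
/- Weierstrass division for multivariate formal power series: let k be a field, n ≥ 1, and let f ∈ k[[x₁,…,xₙ]] be x₁-regular of order a, i.e. the one-variable power series f(x₁,0,…,0) ∈ k[[x₁]] has zero coefficients in degrees < a and nonzero coefficient in degree a. Then for every g ∈ k[[x₁,…,xₙ]] there exist unique u ∈ k[[x₁,…,xₙ]] and r₀,…,r_{a−1} ∈ k[[x₂,…,xₙ]] such that g = u·f + Σ_{i=0}^{a−1} rᵢ·x₁^i. -/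
namespace Stmt12Aux

open MvPowerSeries Finsupp Finset

variable {k : Type*} [Field k] {n : ℕ}

/-- sum of exponents away from `e₀` -/
def Nw (e₀ : Fin n) (K : Fin n →₀ ℕ) : ℕ := ∑ i ∈ Finset.univ.erase e₀, K i

/-- the termination measure -/
def phi (e₀ : Fin n) (a : ℕ) (K : Fin n →₀ ℕ) : ℕ := (a+1) * Nw e₀ K + K e₀

lemma Nw_add (e₀ : Fin n) (K L : Fin n →₀ ℕ) : Nw e₀ (K + L) = Nw e₀ K + Nw e₀ L := by
  simp [Nw, Finsupp.add_apply, Finset.sum_add_distrib]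

lemma Nw_single (e₀ : Fin n) (m : ℕ) : Nw e₀ (Finsupp.single e₀ m) = 0 := by
  refine Finset.sum_eq_zero fun i hi => ?_
  rw [Finsupp.single_apply, if_neg]
  exact fun h => (Finset.mem_erase.mp hi).1 h.symm

lemma eq_single_of_Nw_eq_zero {e₀ : Fin n} {M : Fin n →₀ ℕ} (h : Nw e₀ M = 0) :
    M = Finsupp.single e₀ (M e₀) := by
  ext i
  rcases eq_or_ne i e₀ with rfl | hi
  · simp
  · rw [Finsupp.single_apply, if_neg (fun h' => hi h'.symm)]
    exact (Finset.sum_eq_zero_iff.mp h) i (Finset.mem_erase.mpr ⟨hi, Finset.mem_univ i⟩)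

/-- key combinatorial lemma -/
lemma key {e₀ : Fin n} {a : ℕ} {L M K : Fin n →₀ ℕ}
    (hLM : L + M = K + Finsupp.single e₀ a)
    (h1 : ¬ phi e₀ a L < phi e₀ a K)
    (h2 : (L, M) ≠ (K, Finsupp.single e₀ a)) :
    M = Finsupp.single e₀ (M e₀) ∧ M e₀ < a := by
  have hN : Nw e₀ L + Nw e₀ M = Nw e₀ K := by
    have := congrArg (Nw e₀) hLM
    rwa [Nw_add, Nw_add, Nw_single, add_zero] at this
  have hE : L e₀ + M e₀ = K e₀ + a := by
    have := congrArg (fun x : Fin n →₀ ℕ => x e₀) hLM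
    simpa using this
  have hNM : Nw e₀ M = 0 := by
    by_contra h
    apply h1
    have h3 : Nw e₀ L + 1 ≤ Nw e₀ K := by omega
    have h4 : L e₀ ≤ K e₀ + a := by omega
    calc phi e₀ a L = (a+1) * Nw e₀ L + L e₀ := rfl
      _ ≤ (a+1) * Nw e₀ L + (K e₀ + a) := by omega
      _ < (a+1) * (Nw e₀ L + 1) + K e₀ := by ring_nf; omega
      _ ≤ (a+1) * Nw e₀ K + K e₀ := by
          have := Nat.mul_le_mul_left (a+1) h3; omega
      _ = phi e₀ a K := rfl
  have hMeq := eq_single_of_Nw_eq_zero hNM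
  refine ⟨hMeq, ?_⟩
  have hNL : Nw e₀ L = Nw e₀ K := by omega
  have h1' : K e₀ ≤ L e₀ := by
    by_contra h
    apply h1
    unfold phi
    rw [hNL]
    omega
  have hMa : M e₀ ≤ a := by omega
  rcases lt_or_eq_of_le hMa with h | h
  · exact h
  · exfalso
    apply h2
    rw [h] at hMeq
    have hL : L = K := by
      have h5 : L + M = K + M := by rw [hLM, hMeq]
      exact add_right_cancel h5
    rw [hL, hMeq]

end Stmt12Aux

namespace Stmt12Aux

variable {k : Type*} [Field k] {n : ℕ}

/-- the coefficients of the quotient in Weierstrass division -/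
noncomputable def wdiv (e₀ : Fin n) (a : ℕ) (f g : MvPowerSeries (Fin n) k) :
    (Fin n →₀ ℕ) → k
  | K =>
    (MvPowerSeries.coeff (Finsupp.single e₀ a) f)⁻¹ *
      (MvPowerSeries.coeff (K + Finsupp.single e₀ a) g -
        ∑ p ∈ ((Finset.HasAntidiagonal.antidiagonal (K + Finsupp.single e₀ a)).filter
            (fun p => phi e₀ a p.1 < phi e₀ a K)).attach,
          wdiv e₀ a f g p.1.1 * MvPowerSeries.coeff p.1.2 f)
  termination_by K => phi e₀ a K
  decreasing_by
    exact (Finset.mem_filter.mp p.2).2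

end Stmt12Aux

namespace Stmt12Aux

variable {k : Type*} [Field k] {n : ℕ}

lemma coeff_mul_X_pow (e₀ : Fin n) (m : ℕ) (s : MvPowerSeries (Fin n) k) (K : Fin n →₀ ℕ) :
    MvPowerSeries.coeff K (s * MvPowerSeries.X e₀ ^ m) =
      if Finsupp.single e₀ m ≤ K then MvPowerSeries.coeff (K - Finsupp.single e₀ m) s
      else 0 := by
  rw [MvPowerSeries.X_pow_eq, MvPowerSeries.coeff_mul_monomial]
  split <;> simp

lemma coeff_sum_of_le {e₀ : Fin n} {a : ℕ} (s : Fin a → MvPowerSeries (Fin n) k)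
    (hs : ∀ i, ∀ K : Fin n →₀ ℕ, K e₀ ≠ 0 → MvPowerSeries.coeff K (s i) = 0)
    {K : Fin n →₀ ℕ} (hK : a ≤ K e₀) :
    MvPowerSeries.coeff K (∑ i : Fin a, s i * (MvPowerSeries.X e₀) ^ (i : ℕ)) = 0 := by
  rw [map_sum]
  refine Finset.sum_eq_zero fun i _ => ?_
  rw [coeff_mul_X_pow]
  split
  · apply hs
    rw [Finsupp.tsub_apply, Finsupp.single_apply, if_pos rfl]
    have : (i : ℕ) < a := i.2
    omega
  · rfl

lemma coeff_sum_of_lt {e₀ : Fin n} {a : ℕ} (s : Fin a → MvPowerSeries (Fin n) k)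
    (hs : ∀ i, ∀ K : Fin n →₀ ℕ, K e₀ ≠ 0 → MvPowerSeries.coeff K (s i) = 0)
    {K : Fin n →₀ ℕ} (hK : K e₀ < a) :
    MvPowerSeries.coeff K (∑ i : Fin a, s i * (MvPowerSeries.X e₀) ^ (i : ℕ)) =
      MvPowerSeries.coeff (K - Finsupp.single e₀ (K e₀)) (s ⟨K e₀, hK⟩) := by
  rw [map_sum]
  rw [Finset.sum_eq_single (⟨K e₀, hK⟩ : Fin a)]
  · rw [coeff_mul_X_pow, if_pos (Finsupp.single_le_iff.mpr le_rfl)]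
  · intro j _ hj
    rw [coeff_mul_X_pow]
    split
    · next h =>
      apply hs
      have hj' : (j : ℕ) ≤ K e₀ := Finsupp.single_le_iff.mp h
      have hj'' : (j : ℕ) ≠ K e₀ := fun hc => hj (by ext; simpa using hc)
      rw [Finsupp.tsub_apply, Finsupp.single_apply, if_pos rfl]
      omega
    · rfl
  · intro h
    exact absurd (Finset.mem_univ _) h

end Stmt12Aux

namespace Stmt12Aux

variable {k : Type*} [Field k] {n : ℕ}

/-- the quotient as a power series -/
noncomputable def wdivPS (e₀ : Fin n) (a : ℕ) (f g : MvPowerSeries (Fin n) k) :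
    MvPowerSeries (Fin n) k := wdiv e₀ a f g

lemma coeff_wdiv (e₀ : Fin n) (a : ℕ) (f g : MvPowerSeries (Fin n) k) (K : Fin n →₀ ℕ) :
    MvPowerSeries.coeff K (wdivPS e₀ a f g) = wdiv e₀ a f g K :=
  rfl

lemma coeff_wdiv_mul (e₀ : Fin n) (a : ℕ) (f g : MvPowerSeries (Fin n) k)
    (hreg₁ : ∀ m : ℕ, m < a → MvPowerSeries.coeff (Finsupp.single e₀ m) f = 0)
    (hreg₂ : MvPowerSeries.coeff (Finsupp.single e₀ a) f ≠ 0) (K : Fin n →₀ ℕ) :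
    MvPowerSeries.coeff (K + Finsupp.single e₀ a)
        (wdivPS e₀ a f g * f) =
      MvPowerSeries.coeff (K + Finsupp.single e₀ a) g := by
  classical
  rw [MvPowerSeries.coeff_mul]
  set e := Finsupp.single e₀ a with he
  set t := (Finset.HasAntidiagonal.antidiagonal (K + e)).filter (fun p => phi e₀ a p.1 < phi e₀ a K) with ht
  have hKe_mem : (K, e) ∈ Finset.HasAntidiagonal.antidiagonal (K + e) := by
    rw [Finset.HasAntidiagonal.mem_antidiagonal]
  have hKe_notmem : (K, e) ∉ t := by
    rw [ht, Finset.mem_filter]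
    simp
  have hsub : insert (K, e) t ⊆ Finset.HasAntidiagonal.antidiagonal (K + e) := by
    intro x hx
    rcases Finset.mem_insert.mp hx with rfl | hx
    · exact hKe_mem
    · exact Finset.mem_of_mem_filter x hx
  rw [← Finset.sum_subset hsub]
  · rw [Finset.sum_insert hKe_notmem, coeff_wdiv]
    have hUK : wdiv e₀ a f g K =
        (MvPowerSeries.coeff e f)⁻¹ *
          (MvPowerSeries.coeff (K + e) g -
            ∑ p ∈ t, wdiv e₀ a f g p.1 *
              MvPowerSeries.coeff p.2 f) := by
      rw [wdiv]
      rw [← Finset.sum_attach t (fun p => wdiv e₀ a f g p.1 *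
              MvPowerSeries.coeff p.2 f)]
    rw [hUK]
    have : ∀ p ∈ t, MvPowerSeries.coeff p.1 (wdivPS e₀ a f g) *
        MvPowerSeries.coeff p.2 f =
        wdiv e₀ a f g p.1 * MvPowerSeries.coeff p.2 f :=
      fun p _ => rfl
    rw [Finset.sum_congr rfl this]
    field_simp
    exact sub_add_cancel _ _
  · intro x hx hx'
    have hxe : x ≠ (K, e) := fun h => hx' (h ▸ Finset.mem_insert_self _ _)
    have hxt : ¬ phi e₀ a x.1 < phi e₀ a K := fun h =>
      hx' (Finset.mem_insert_of_mem (Finset.mem_filter.mpr ⟨hx, h⟩))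
    have hsum : x.1 + x.2 = K + e := Finset.HasAntidiagonal.mem_antidiagonal.mp hx
    obtain ⟨hM, hMa⟩ := key hsum hxt (by rwa [← Prod.mk.eta (p := x)] at hxe)
    rw [hM, hreg₁ _ hMa, mul_zero]

end Stmt12Aux

namespace Stmt12Aux

variable {k : Type*} [Field k] {n : ℕ}

lemma unique_zero (e₀ : Fin n) (a : ℕ) (f : MvPowerSeries (Fin n) k)
    (hreg₁ : ∀ m : ℕ, m < a → MvPowerSeries.coeff (Finsupp.single e₀ m) f = 0)
    (hreg₂ : MvPowerSeries.coeff (Finsupp.single e₀ a) f ≠ 0)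
    (v : MvPowerSeries (Fin n) k) (s : Fin a → MvPowerSeries (Fin n) k)
    (hs : ∀ i, ∀ K : Fin n →₀ ℕ, K e₀ ≠ 0 → MvPowerSeries.coeff K (s i) = 0)
    (heq : v * f + ∑ i : Fin a, s i * (MvPowerSeries.X e₀) ^ (i : ℕ) = 0) :
    v = 0 ∧ ∀ i, s i = 0 := by
  classical
  set e := Finsupp.single e₀ a with he
  have hv : ∀ m : ℕ, ∀ K : Fin n →₀ ℕ, phi e₀ a K < m → MvPowerSeries.coeff K v = 0 := by
    intro m
    induction m with
    | zero => intro K hK; omega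
    | succ m ih =>
      intro K hK
      have hco := congrArg (MvPowerSeries.coeff (K + e)) heq
      rw [map_add, map_zero] at hco
      have hsum0 : MvPowerSeries.coeff (K + e)
          (∑ i : Fin a, s i * (MvPowerSeries.X e₀) ^ (i : ℕ)) = 0 := by
        apply coeff_sum_of_le s hs
        simp [he, Finsupp.add_apply]
      rw [hsum0, add_zero, MvPowerSeries.coeff_mul] at hco
      rw [Finset.sum_eq_single_of_mem (K, e) (by rw [Finset.HasAntidiagonal.mem_antidiagonal])] at hco
      · have : MvPowerSeries.coeff K v = 0 ∨ MvPowerSeries.coeff e f = 0 :=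
          mul_eq_zero.mp hco
        tauto
      · intro p hp hne
        by_cases hφ : phi e₀ a p.1 < phi e₀ a K
        · rw [ih p.1 (by omega), zero_mul]
        · obtain ⟨hM, hMa⟩ := key (Finset.HasAntidiagonal.mem_antidiagonal.mp hp) hφ
            (by rwa [← Prod.mk.eta (p := p)] at hne)
          rw [hM, hreg₁ _ hMa, mul_zero]
  have hv0 : v = 0 := by
    ext K
    rw [map_zero]
    exact hv (phi e₀ a K + 1) K (by omega)
  rw [hv0, zero_mul, zero_add] at heq
  refine ⟨hv0, fun i => ?_⟩
  ext K
  rw [map_zero]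
  by_cases hK : K e₀ = 0
  · have hco := congrArg (MvPowerSeries.coeff (K + Finsupp.single e₀ (i : ℕ))) heq
    rw [map_zero] at hco
    have hlt : (K + Finsupp.single e₀ (i : ℕ)) e₀ < a := by
      rw [Finsupp.add_apply, hK, Finsupp.single_apply, if_pos rfl, zero_add]
      exact i.2
    rw [coeff_sum_of_lt s hs hlt] at hco
    have h1 : (K + Finsupp.single e₀ (i : ℕ)) e₀ = (i : ℕ) := by
      rw [Finsupp.add_apply, hK, Finsupp.single_apply, if_pos rfl, zero_add]
    have h2 : (⟨(K + Finsupp.single e₀ (i : ℕ)) e₀, hlt⟩ : Fin a) = i := by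
      ext; simpa using h1
    rw [h2] at hco
    rw [← hco]
    congr 2
    rw [show Finsupp.single e₀ ((K + Finsupp.single e₀ (i : ℕ)) e₀)
        = Finsupp.single e₀ (i : ℕ) from by rw [h1]]
    exact (add_tsub_cancel_right K (Finsupp.single e₀ (i : ℕ))).symm
  · exact hs i K hK

end Stmt12Aux

open Stmt12Aux in
/-- Weierstrass division for multivariate formal power series: if `f ∈ k[[x₁,…,xₙ]]` is
`x₁`-regular of order `a` (the one-variable series `f(x₁,0,…,0)` vanishes to order exactly
`a`), then every `g` can be written uniquely as `g = u·f + Σ_{i<a} rᵢ·x₁^i` with the `rᵢ`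
power series not involving `x₁`. -/
theorem stmt12 {k : Type*} [Field k] (n : ℕ) (hn : 0 < n) (a : ℕ)
    (f : MvPowerSeries (Fin n) k)
    (hreg₁ : ∀ m : ℕ, m < a → MvPowerSeries.coeff (Finsupp.single ⟨0, hn⟩ m) f = 0)
    (hreg₂ : MvPowerSeries.coeff (Finsupp.single ⟨0, hn⟩ a) f ≠ 0)
    (g : MvPowerSeries (Fin n) k) :
    ∃ (u : MvPowerSeries (Fin n) k) (r : Fin a → MvPowerSeries (Fin n) k),
      (∀ i, ∀ K : Fin n →₀ ℕ, K ⟨0, hn⟩ ≠ 0 → MvPowerSeries.coeff K (r i) = 0) ∧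
      g = u * f + ∑ i : Fin a, r i * (MvPowerSeries.X ⟨0, hn⟩) ^ (i : ℕ) ∧
      ∀ (u' : MvPowerSeries (Fin n) k) (r' : Fin a → MvPowerSeries (Fin n) k),
        (∀ i, ∀ K : Fin n →₀ ℕ, K ⟨0, hn⟩ ≠ 0 → MvPowerSeries.coeff K (r' i) = 0) →
        g = u' * f + ∑ i : Fin a, r' i * (MvPowerSeries.X ⟨0, hn⟩) ^ (i : ℕ) →
        u' = u ∧ r' = r := by
  classical
  set e₀ : Fin n := ⟨0, hn⟩ with he₀
  set U : MvPowerSeries (Fin n) k := wdivPS e₀ a f g with hU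
  set R : Fin a → MvPowerSeries (Fin n) k := fun i =>
    (fun K => if K e₀ = 0 then
        MvPowerSeries.coeff (K + Finsupp.single e₀ (i : ℕ)) g -
        MvPowerSeries.coeff (K + Finsupp.single e₀ (i : ℕ)) (U * f)
      else 0 : MvPowerSeries (Fin n) k) with hR
  have hRcoeff : ∀ (i : Fin a) (K : Fin n →₀ ℕ),
      MvPowerSeries.coeff K (R i) = if K e₀ = 0 then
        MvPowerSeries.coeff (K + Finsupp.single e₀ (i : ℕ)) g -
        MvPowerSeries.coeff (K + Finsupp.single e₀ (i : ℕ)) (U * f)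
      else 0 := fun i K => rfl
  have hRprop : ∀ i, ∀ K : Fin n →₀ ℕ, K e₀ ≠ 0 → MvPowerSeries.coeff K (R i) = 0 := by
    intro i K hK
    rw [hRcoeff, if_neg hK]
  have hmain : g = U * f + ∑ i : Fin a, R i * (MvPowerSeries.X e₀) ^ (i : ℕ) := by
    ext K
    rw [map_add]
    by_cases h : a ≤ K e₀
    · rw [coeff_sum_of_le R hRprop h, add_zero]
      have hK' : K - Finsupp.single e₀ a + Finsupp.single e₀ a = K :=
        tsub_add_cancel_of_le (Finsupp.single_le_iff.mpr h)
      rw [← hK', coeff_wdiv_mul e₀ a f g hreg₁ hreg₂]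
    · push_neg at h
      rw [coeff_sum_of_lt R hRprop h, hRcoeff]
      have h0 : (K - Finsupp.single e₀ (K e₀)) e₀ = 0 := by
        rw [Finsupp.tsub_apply, Finsupp.single_apply, if_pos rfl]
        omega
      rw [if_pos h0]
      have h1 : K - Finsupp.single e₀ (K e₀) +
          Finsupp.single e₀ ((⟨K e₀, h⟩ : Fin a) : ℕ) = K := by
        exact tsub_add_cancel_of_le (Finsupp.single_le_iff.mpr le_rfl)
      rw [h1]
      ring
  refine ⟨U, R, hRprop, hmain, ?_⟩
  intro u' r' hprop' heq'
  have h0 : (u' - U) * f + ∑ i : Fin a, (r' i - R i) * (MvPowerSeries.X e₀) ^ (i : ℕ) = 0 := by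
    simp only [sub_mul, Finset.sum_sub_distrib]
    have := heq'.symm
    have h2 := hmain.symm
    calc u' * f - U * f + (∑ i : Fin a, r' i * (MvPowerSeries.X e₀) ^ (i : ℕ) -
          ∑ i : Fin a, R i * (MvPowerSeries.X e₀) ^ (i : ℕ))
        = (u' * f + ∑ i : Fin a, r' i * (MvPowerSeries.X e₀) ^ (i : ℕ)) -
          (U * f + ∑ i : Fin a, R i * (MvPowerSeries.X e₀) ^ (i : ℕ)) := by ring
      _ = g - g := by rw [this, h2]
      _ = 0 := sub_self g
  have hsprop : ∀ i, ∀ K : Fin n →₀ ℕ, K e₀ ≠ 0 →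
      MvPowerSeries.coeff K (r' i - R i) = 0 := by
    intro i K hK
    rw [map_sub, hprop' i K hK, hRprop i K hK, sub_zero]
  obtain ⟨hv, hs⟩ := unique_zero e₀ a f hreg₁ hreg₂ (u' - U) (fun i => r' i - R i)
    hsprop h0
  constructor
  · exact sub_eq_zero.mp hv
  · funext i
    exact sub_eq_zero.mp (hs i)
end

section
/- Weierstrass preparation for multivariate formal power series: let k be a field, n ≥ 1, and let f ∈ k[[x₁,…,xₙ]] be x₁-regular of order a, i.e. f(x₁,0,…,0) ∈ k[[x₁]] has zero coefficients in degrees < a and nonzero coefficient in degree a. Then there exist a unique unit u of k[[x₁,…,xₙ]] and unique c₀,…,c_{a−1} ∈ k[[x₂,…,xₙ]], each with zero constant coefficient, such that f = u · (x₁^a + Σ_{i=0}^{a−1} cᵢ·x₁^i). -/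
open MvPowerSeries Finsupp Finset

namespace WPaux

variable {k : Type*} [Field k] {n : ℕ}

/-- Total degree of the part of an exponent away from the variable `s`. -/
noncomputable def wdeg (s : Fin n) (D : Fin n →₀ ℕ) : ℕ := (D.erase s).sum fun _ m => m

/-- The well-founded order used in the recursive construction of the Weierstrass quotient. -/
def cond (s : Fin n) (D1 D : Fin n →₀ ℕ) : Prop :=
  wdeg s D1 < wdeg s D ∨ (wdeg s D1 = wdeg s D ∧ D1 s < D s)

noncomputable instance (s : Fin n) (D1 D : Fin n →₀ ℕ) : Decidable (cond s D1 D) := by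
  unfold cond; infer_instance

lemma wdeg_add (s : Fin n) (D1 D2 : Fin n →₀ ℕ) :
    wdeg s (D1 + D2) = wdeg s D1 + wdeg s D2 := by
  unfold wdeg
  rw [Finsupp.erase_add, Finsupp.sum_add_index]
  · intro _ _; rfl
  · intro _ _ _ _; rfl

lemma eq_zero_of_wdeg_erase (s : Fin n) (D : Fin n →₀ ℕ) (h : wdeg s D = 0) :
    D.erase s = 0 := by
  unfold wdeg at h
  ext t
  by_cases ht : t ∈ (D.erase s).support
  · exact absurd (Finset.sum_eq_zero_iff.mp h t ht) (Finsupp.mem_support_iff.mp ht)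
  · simpa using Finsupp.notMem_support_iff.mp ht

lemma eq_single_of_erase_eq_zero (s : Fin n) (D : Fin n →₀ ℕ) (h : D.erase s = 0) :
    D = Finsupp.single s (D s) := by
  ext t
  by_cases hts : t = s
  · subst hts; simp
  · have := congrFun (congrArg (↑·) h) t
    simp [Finsupp.erase_ne hts] at this
    simp [this, Finsupp.single_apply, Ne.symm hts, hts]

/-- Structure of pairs in the antidiagonal that are not below `D` in the order. -/
lemma not_cond_aux (s : Fin n) (a : ℕ) {D1 D2 D : Fin n →₀ ℕ}
    (hsum : D1 + D2 = D + Finsupp.single s a)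
    (hnc : ¬ cond s D1 D) (hne : (D1, D2) ≠ (D, Finsupp.single s a)) :
    D2 = Finsupp.single s (D2 s) ∧ D2 s < a := by
  have herase : D1.erase s + D2.erase s = D.erase s := by
    have := congrArg (Finsupp.erase s) hsum
    rwa [Finsupp.erase_add, Finsupp.erase_add, Finsupp.erase_single, add_zero] at this
  have hwadd : wdeg s D1 + wdeg s D2 = wdeg s D := by
    have := congrArg (wdeg s) hsum
    rwa [wdeg_add, wdeg_add, show wdeg s (Finsupp.single s a) = 0 by
      simp [wdeg, Finsupp.erase_single], add_zero] at this
  unfold cond at hnc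
  push_neg at hnc
  have hw1 : wdeg s D1 = wdeg s D := le_antisymm (by omega) hnc.1
  have hs1 : D s ≤ D1 s := hnc.2 hw1
  have hw2 : wdeg s D2 = 0 := by omega
  have hD2 : D2 = Finsupp.single s (D2 s) :=
    eq_single_of_erase_eq_zero s D2 (eq_zero_of_wdeg_erase s D2 hw2)
  have hE1 : D1.erase s = D.erase s := by
    rw [eq_zero_of_wdeg_erase s D2 hw2, add_zero] at herase
    exact herase
  have hsapp : D1 s + D2 s = D s + a := by
    have := congrFun (congrArg (↑·) hsum) s
    simpa using this
  refine ⟨hD2, ?_⟩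
  rcases lt_or_ge (D2 s) a with h | h
  · exact h
  · exfalso
    have hD2a : D2 s = a := by omega
    have hD1s : D1 s = D s := by omega
    have hD1 : D1 = D := by
      ext t
      by_cases hts : t = s
      · subst hts; exact hD1s
      · have := congrFun (congrArg (↑·) hE1) t
        simpa [Finsupp.erase_ne hts] using this
    exact hne (by rw [hD1, hD2, hD2a])

/-- Coefficient of a product at `D + single s a`, split into the "recursive" part and the
leading term, for `f` that is `s`-regular of order `a`. -/
lemma splitting (s : Fin n) (a : ℕ) (f Q : MvPowerSeries (Fin n) k)
    (hreg₁ : ∀ m : ℕ, m < a → MvPowerSeries.coeff (Finsupp.single s m) f = 0)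
    (D : Fin n →₀ ℕ) :
    MvPowerSeries.coeff (D + Finsupp.single s a) (Q * f) =
      (∑ p ∈ (Finset.HasAntidiagonal.antidiagonal (D + Finsupp.single s a)).filter (fun p => cond s p.1 D),
        MvPowerSeries.coeff p.1 Q * MvPowerSeries.coeff p.2 f)
      + MvPowerSeries.coeff D Q * MvPowerSeries.coeff (Finsupp.single s a) f := by
  classical
  rw [MvPowerSeries.coeff_mul,
    ← Finset.sum_filter_add_sum_filter_not _ (fun p => cond s p.1 D)]
  congr 1
  apply Finset.sum_eq_single_of_mem (D, Finsupp.single s a)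
  · rw [Finset.mem_filter, Finset.HasAntidiagonal.mem_antidiagonal]
    exact ⟨rfl, by unfold cond; simp⟩
  · rintro ⟨D1, D2⟩ hp hne
    rw [Finset.mem_filter, Finset.HasAntidiagonal.mem_antidiagonal] at hp
    obtain ⟨h2, hlt⟩ := not_cond_aux s a hp.1 hp.2 hne
    rw [h2, hreg₁ _ hlt, mul_zero]

/-- The coefficients of the Weierstrass quotient, defined by well-founded recursion. -/
noncomputable def Qc (s : Fin n) (a : ℕ) (f g : MvPowerSeries (Fin n) k)
    (D : Fin n →₀ ℕ) : k :=
  (MvPowerSeries.coeff (Finsupp.single s a) f)⁻¹ *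
    (MvPowerSeries.coeff (D + Finsupp.single s a) g -
      ∑ p ∈ (Finset.HasAntidiagonal.antidiagonal (D + Finsupp.single s a)).attach,
        if h : cond s p.1.1 D then Qc s a f g p.1.1 * MvPowerSeries.coeff p.1.2 f else 0)
termination_by (wdeg s D, D s)
decreasing_by
  rcases h with h | ⟨h1, h2⟩
  · exact Prod.Lex.left _ _ h
  · exact h1 ▸ Prod.Lex.right _ h2

lemma Qc_eq (s : Fin n) (a : ℕ) (f g : MvPowerSeries (Fin n) k) (D : Fin n →₀ ℕ) :
    Qc s a f g D =
      (MvPowerSeries.coeff (Finsupp.single s a) f)⁻¹ *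
        (MvPowerSeries.coeff (D + Finsupp.single s a) g -
          ∑ p ∈ (Finset.HasAntidiagonal.antidiagonal (D + Finsupp.single s a)).filter (fun p => cond s p.1 D),
            Qc s a f g p.1 * MvPowerSeries.coeff p.2 f) := by
  rw [Qc]
  congr 2
  rw [Finset.sum_filter,
    ← Finset.sum_attach ((Finset.HasAntidiagonal.antidiagonal (D + Finsupp.single s a)))
    (fun p => if cond s p.1 D then Qc s a f g p.1 * MvPowerSeries.coeff p.2 f else 0)]
  exact Finset.sum_congr rfl fun p _ => by rw [dite_eq_ite]

/-- The Weierstrass quotient as a multivariate power series. -/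
noncomputable def QS (s : Fin n) (a : ℕ) (f g : MvPowerSeries (Fin n) k) :
    MvPowerSeries (Fin n) k := fun D => Qc s a f g D

lemma coeff_QS (s : Fin n) (a : ℕ) (f g : MvPowerSeries (Fin n) k) (D : Fin n →₀ ℕ) :
    MvPowerSeries.coeff D (QS s a f g) = Qc s a f g D := rfl

lemma coeff_QS_mul (s : Fin n) (a : ℕ) (f g : MvPowerSeries (Fin n) k)
    (hreg₁ : ∀ m : ℕ, m < a → MvPowerSeries.coeff (Finsupp.single s m) f = 0)
    (hreg₂ : MvPowerSeries.coeff (Finsupp.single s a) f ≠ 0) (D : Fin n →₀ ℕ) :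
    MvPowerSeries.coeff (D + Finsupp.single s a) (QS s a f g * f) =
      MvPowerSeries.coeff (D + Finsupp.single s a) g := by
  rw [splitting s a f _ hreg₁ D]
  simp only [coeff_QS]
  rw [Qc_eq s a f g D, mul_comm ((MvPowerSeries.coeff (Finsupp.single s a) f)⁻¹) _,
    mul_assoc, inv_mul_cancel₀ hreg₂, mul_one, add_sub_cancel]

/-- Uniqueness: if `Q * f` has vanishing coefficients in `x_s`-degrees `≥ a`, then `Q = 0`. -/
lemma Q_eq_zero (s : Fin n) (a : ℕ) (f Q : MvPowerSeries (Fin n) k)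
    (hreg₁ : ∀ m : ℕ, m < a → MvPowerSeries.coeff (Finsupp.single s m) f = 0)
    (hreg₂ : MvPowerSeries.coeff (Finsupp.single s a) f ≠ 0)
    (h0 : ∀ E : Fin n →₀ ℕ, a ≤ E s → MvPowerSeries.coeff E (Q * f) = 0) :
    Q = 0 := by
  have key : ∀ w j (D : Fin n →₀ ℕ), wdeg s D = w → D s = j →
      MvPowerSeries.coeff D Q = 0 := by
    intro w
    induction w using Nat.strong_induction_on with
    | _ w ihw =>
      intro j
      induction j using Nat.strong_induction_on with
      | _ j ihj =>
        intro D hw hj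
        have hE := h0 (D + Finsupp.single s a) (by simp)
        rw [splitting s a f Q hreg₁ D, Finset.sum_eq_zero, zero_add] at hE
        · exact (mul_eq_zero.mp hE).resolve_right hreg₂
        · rintro ⟨D1, D2⟩ hp
          rw [Finset.mem_filter] at hp
          rcases hp.2 with h | ⟨h1, h2⟩
          · rw [ihw _ (hw ▸ h) (D1 s) D1 rfl rfl, zero_mul]
          · rw [ihj _ (hj ▸ h2) D1 (h1.trans hw) rfl, zero_mul]
  apply MvPowerSeries.ext
  intro D
  rw [key (wdeg s D) (D s) D rfl rfl, map_zero]

lemma coeff_mul_Xpow (s : Fin n) (c : MvPowerSeries (Fin n) k) (i : ℕ) (D : Fin n →₀ ℕ) :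
    MvPowerSeries.coeff D (c * MvPowerSeries.X s ^ i) =
      if Finsupp.single s i ≤ D then MvPowerSeries.coeff (D - Finsupp.single s i) c
      else 0 := by
  classical
  rw [MvPowerSeries.X_pow_eq, MvPowerSeries.coeff_mul_monomial]
  split_ifs with h
  · rw [mul_one]
  · rfl

/-- Coefficients of the product at low `s`-degrees vanish. -/
lemma coeff_mul_low (s : Fin n) (a : ℕ) (f Q : MvPowerSeries (Fin n) k)
    (hreg₁ : ∀ m : ℕ, m < a → MvPowerSeries.coeff (Finsupp.single s m) f = 0)
    {i : ℕ} (hi : i < a) :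
    MvPowerSeries.coeff (Finsupp.single s i) (Q * f) = 0 := by
  classical
  rw [MvPowerSeries.coeff_mul]
  apply Finset.sum_eq_zero
  rintro ⟨D1, D2⟩ hp
  rw [Finset.HasAntidiagonal.mem_antidiagonal] at hp
  have hpt : ∀ t, D1 t + D2 t = (Finsupp.single s i) t := fun t => by
    have := congrFun (congrArg (↑·) hp) t
    simpa using this
  have h2 : D2 = Finsupp.single s (D2 s) := by
    apply eq_single_of_erase_eq_zero
    ext t
    by_cases hts : t = s
    · simp [hts]
    · have := hpt t
      rw [Finsupp.single_apply, if_neg (Ne.symm hts)] at this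
      simp [Finsupp.erase_ne hts]
      omega
  have h2s : D2 s < a := by
    have := hpt s
    rw [Finsupp.single_eq_same] at this
    omega
  rw [h2, hreg₁ _ h2s, mul_zero]

/-- The "coefficient" series of `h` in `x_s`-degree `i`. -/
noncomputable def cS (s : Fin n) (i : ℕ) (h : MvPowerSeries (Fin n) k) :
    MvPowerSeries (Fin n) k :=
  fun K => if K s = 0 then MvPowerSeries.coeff (K + Finsupp.single s i) h else 0

lemma coeff_cS (s : Fin n) (i : ℕ) (h : MvPowerSeries (Fin n) k) (K : Fin n →₀ ℕ) :
    MvPowerSeries.coeff K (cS s i h) =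
      if K s = 0 then MvPowerSeries.coeff (K + Finsupp.single s i) h else 0 := rfl

/-- A series whose coefficients vanish in `s`-degrees `≥ a` is a polynomial of degree `< a`
in `x_s` with coefficients not involving `x_s`. -/
lemma sum_cS_eq (s : Fin n) (a : ℕ) (h : MvPowerSeries (Fin n) k)
    (hvan : ∀ E : Fin n →₀ ℕ, a ≤ E s → MvPowerSeries.coeff E h = 0) :
    ∑ i : Fin a, cS s (i : ℕ) h * MvPowerSeries.X s ^ (i : ℕ) = h := by
  apply MvPowerSeries.ext
  intro D
  rw [map_sum]
  by_cases hD : D s < a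
  · rw [Finset.sum_eq_single (⟨D s, hD⟩ : Fin a)]
    · rw [coeff_mul_Xpow, if_pos (Finsupp.single_le_iff.mpr le_rfl), coeff_cS, if_pos
        (by rw [Finsupp.tsub_apply, Finsupp.single_eq_same, Nat.sub_self]),
        tsub_add_cancel_of_le (Finsupp.single_le_iff.mpr le_rfl)]
    · intro j _ hj
      rw [coeff_mul_Xpow]
      split_ifs with hle
      · have hjle : (j : ℕ) ≤ D s := by simpa using Finsupp.single_le_iff.mp hle
        have hjne : (j : ℕ) ≠ D s := fun hc => hj (by ext; simpa using hc)
        rw [coeff_cS, if_neg (by rw [Finsupp.tsub_apply, Finsupp.single_eq_same]; omega)]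
      · rfl
    · simp
  · rw [hvan D (le_of_not_gt hD), Finset.sum_eq_zero]
    intro j _
    rw [coeff_mul_Xpow]
    split_ifs with hle
    · rw [coeff_cS, if_neg]
      rw [Finsupp.tsub_apply, Finsupp.single_eq_same]
      have : (j : ℕ) < a := j.2
      omega
    · rfl

/-- Vanishing of coefficients of `∑ dᵢ xₛ^i` in `s`-degrees `≥ a`. -/
lemma van_sum (s : Fin n) (a : ℕ) (d : Fin a → MvPowerSeries (Fin n) k)
    (hd : ∀ i, ∀ K : Fin n →₀ ℕ, K s ≠ 0 → MvPowerSeries.coeff K (d i) = 0)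
    (E : Fin n →₀ ℕ) (hE : a ≤ E s) :
    MvPowerSeries.coeff E (∑ i : Fin a, d i * MvPowerSeries.X s ^ (i : ℕ)) = 0 := by
  rw [map_sum]
  apply Finset.sum_eq_zero
  intro j _
  rw [coeff_mul_Xpow]
  split_ifs with hle
  · apply hd
    rw [Finsupp.tsub_apply, Finsupp.single_eq_same]
    have : (j : ℕ) < a := j.2
    omega
  · rfl

/-- Extraction: the coefficients of a vanishing polynomial in `x_s` vanish. -/
lemma ext_of_sum (s : Fin n) (a : ℕ) (d : Fin a → MvPowerSeries (Fin n) k)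
    (hd : ∀ i, ∀ K : Fin n →₀ ℕ, K s ≠ 0 → MvPowerSeries.coeff K (d i) = 0)
    (hsum : ∑ i : Fin a, d i * MvPowerSeries.X s ^ (i : ℕ) = 0) :
    ∀ i, d i = 0 := by
  intro i
  apply MvPowerSeries.ext
  intro K
  rw [map_zero]
  by_cases hK : K s = 0
  · have h0 := congrArg (MvPowerSeries.coeff (K + Finsupp.single s (i : ℕ))) hsum
    rw [map_sum, map_zero, Finset.sum_eq_single i] at h0
    · rwa [coeff_mul_Xpow, if_pos le_add_self, add_tsub_cancel_right] at h0
    · intro j _ hj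
      rw [coeff_mul_Xpow]
      split_ifs with hle
      · apply hd
        have hjle : (j : ℕ) ≤ K s + (i : ℕ) := by
          have := Finsupp.single_le_iff.mp hle
          simpa using this
        have hjne : (j : ℕ) ≠ (i : ℕ) := fun hc => hj (by ext; simpa using hc)
        rw [Finsupp.tsub_apply, Finsupp.add_apply, Finsupp.single_eq_same,
          Finsupp.single_eq_same]
        omega
      · rfl
    · simp
  · exact hd i K hK

end WPaux

/-- Weierstrass preparation for multivariate formal power series: if `f ∈ k[[x₁,…,xₙ]]` is
`x₁`-regular of order `a`, then `f = u · (x₁^a + Σ_{i<a} cᵢ·x₁^i)` for a unique unit `u`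
and unique power series `cᵢ` not involving `x₁` and with zero constant coefficient. -/
theorem stmt13 {k : Type*} [Field k] (n : ℕ) (hn : 0 < n) (a : ℕ)
    (f : MvPowerSeries (Fin n) k)
    (hreg₁ : ∀ m : ℕ, m < a → MvPowerSeries.coeff (Finsupp.single ⟨0, hn⟩ m) f = 0)
    (hreg₂ : MvPowerSeries.coeff (Finsupp.single ⟨0, hn⟩ a) f ≠ 0) :
    ∃ (u : MvPowerSeries (Fin n) k) (c : Fin a → MvPowerSeries (Fin n) k),
      IsUnit u ∧
      (∀ i, ∀ K : Fin n →₀ ℕ, K ⟨0, hn⟩ ≠ 0 → MvPowerSeries.coeff K (c i) = 0) ∧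
      (∀ i, MvPowerSeries.constantCoeff (c i) = 0) ∧
      f = u * ((MvPowerSeries.X ⟨0, hn⟩) ^ a
          + ∑ i : Fin a, c i * (MvPowerSeries.X ⟨0, hn⟩) ^ (i : ℕ)) ∧
      ∀ (u' : MvPowerSeries (Fin n) k) (c' : Fin a → MvPowerSeries (Fin n) k),
        IsUnit u' →
        (∀ i, ∀ K : Fin n →₀ ℕ, K ⟨0, hn⟩ ≠ 0 → MvPowerSeries.coeff K (c' i) = 0) →
        (∀ i, MvPowerSeries.constantCoeff (c' i) = 0) →
        f = u' * ((MvPowerSeries.X ⟨0, hn⟩) ^ a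
            + ∑ i : Fin a, c' i * (MvPowerSeries.X ⟨0, hn⟩) ^ (i : ℕ)) →
        u' = u ∧ c' = c := by
  classical
  set s : Fin n := ⟨0, hn⟩ with hs
  set Q : MvPowerSeries (Fin n) k := WPaux.QS s a f (MvPowerSeries.X s ^ a) with hQdef
  set h : MvPowerSeries (Fin n) k := Q * f - MvPowerSeries.X s ^ a with hhdef
  -- vanishing of h in high s-degrees
  have hvan : ∀ E : Fin n →₀ ℕ, a ≤ E s → MvPowerSeries.coeff E h = 0 := by
    intro E hE
    have hle : Finsupp.single s a ≤ E := Finsupp.single_le_iff.mpr hE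
    have hEeq : E - Finsupp.single s a + Finsupp.single s a = E := tsub_add_cancel_of_le hle
    rw [hhdef, map_sub, ← hEeq, WPaux.coeff_QS_mul s a f _ hreg₁ hreg₂, sub_self]
  -- Q * f = X^a + Σ cᵢ X^i
  set c : Fin a → MvPowerSeries (Fin n) k := fun i => WPaux.cS s (i : ℕ) h with hcdef
  have hQf : Q * f = MvPowerSeries.X s ^ a
      + ∑ i : Fin a, c i * MvPowerSeries.X s ^ (i : ℕ) := by
    rw [hcdef]
    rw [WPaux.sum_cS_eq s a h hvan, hhdef]
    ring
  -- constant coefficient of Q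
  have hQ0 : MvPowerSeries.constantCoeff Q =
      (MvPowerSeries.coeff (Finsupp.single s a) f)⁻¹ := by
    rw [← MvPowerSeries.coeff_zero_eq_constantCoeff_apply, hQdef, WPaux.coeff_QS,
      WPaux.Qc_eq]
    rw [Finset.sum_eq_zero, sub_zero, zero_add, MvPowerSeries.coeff_X_pow, if_pos rfl,
      mul_one]
    rintro ⟨D1, D2⟩ hp
    rw [Finset.mem_filter] at hp
    exfalso
    rcases hp.2 with hlt | ⟨_, hlt⟩ <;> simp [WPaux.wdeg] at hlt
  have hQ0ne : MvPowerSeries.constantCoeff Q ≠ 0 := by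
    rw [hQ0]; exact inv_ne_zero hreg₂
  set u : MvPowerSeries (Fin n) k := Q⁻¹ with hudef
  have huQ : Q * u = 1 := MvPowerSeries.mul_inv_cancel Q hQ0ne
  have huQ' : u * Q = 1 := by rw [mul_comm]; exact huQ
  have hcvan : ∀ i, ∀ K : Fin n →₀ ℕ, K s ≠ 0 → MvPowerSeries.coeff K (c i) = 0 := by
    intro i K hK
    rw [hcdef]
    rw [WPaux.coeff_cS, if_neg hK]
  refine ⟨u, c, ?_, ?_, ?_, ?_, ?_⟩
  · rw [MvPowerSeries.isUnit_iff_constantCoeff]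
    rw [hudef, MvPowerSeries.constantCoeff_inv]
    exact (inv_ne_zero hQ0ne).isUnit
  · exact hcvan
  · intro i
    rw [← MvPowerSeries.coeff_zero_eq_constantCoeff_apply, hcdef, WPaux.coeff_cS,
      if_pos (show ((0 : Fin n →₀ ℕ) : Fin n → ℕ) s = 0 from rfl), zero_add, hhdef, map_sub, WPaux.coeff_mul_low s a f Q hreg₁ i.2,
      MvPowerSeries.coeff_X_pow, if_neg, sub_self]
    intro hc
    have := congrFun (congrArg (↑·) hc) s
    simp at this
    exact absurd this (Nat.ne_of_lt i.2)
  · rw [← hQf, ← mul_assoc, huQ', one_mul]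
  · intro u' c' hu' hc' _ heq
    obtain ⟨U', hU'⟩ := hu'
    set V : MvPowerSeries (Fin n) k := ↑U'⁻¹ with hVdef
    have hVu : V * u' = 1 := by rw [hVdef, ← hU']; exact U'.inv_mul
    have hVf : V * f = MvPowerSeries.X s ^ a
        + ∑ i : Fin a, c' i * MvPowerSeries.X s ^ (i : ℕ) := by
      rw [heq, ← mul_assoc, hVu, one_mul]
    have hsub : (V - Q) * f = ∑ i : Fin a, (c' i - c i) * MvPowerSeries.X s ^ (i : ℕ) := by
      rw [sub_mul, hVf, hQf]
      have hsm : ∀ i : Fin a, (c' i - c i) * MvPowerSeries.X s ^ (i : ℕ)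
          = c' i * MvPowerSeries.X s ^ (i : ℕ) - c i * MvPowerSeries.X s ^ (i : ℕ) :=
        fun i => sub_mul _ _ _
      rw [Finset.sum_congr rfl fun i _ => hsm i, Finset.sum_sub_distrib]
      ring
    have hvan' : ∀ E : Fin n →₀ ℕ, a ≤ E s →
        MvPowerSeries.coeff E ((V - Q) * f) = 0 := by
      intro E hE
      rw [hsub]
      apply WPaux.van_sum s a _ _ E hE
      intro i K hK
      rw [map_sub, hc' i K hK, hcvan i K hK, sub_self]
    have hVQ : V - Q = 0 := WPaux.Q_eq_zero s a f _ hreg₁ hreg₂ hvan'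
    have hVQ' : V = Q := sub_eq_zero.mp hVQ
    have hczero : ∀ i, c' i - c i = 0 := by
      apply WPaux.ext_of_sum s a
      · intro i K hK
        rw [map_sub, hc' i K hK, hcvan i K hK, sub_self]
      · rw [← hsub, hVQ, zero_mul]
    constructor
    · calc u' = u' * (Q * u) := by rw [huQ, mul_one]
        _ = (u' * V) * u := by rw [hVQ', mul_assoc]
        _ = u := by rw [mul_comm u' V, hVu, one_mul]
    · funext i
      exact sub_eq_zero.mp (hczero i)
end

section
/- Let k be a field, n ≥ 1, a ≥ 1, and let p = x₁^a + Σ_{i=0}^{a−1} cᵢ(x₂,…,xₙ)·x₁^i ∈ k[[x₁,…,xₙ]], where c₀,…,c_{a−1} ∈ k[[x₂,…,xₙ]] and c₀ has zero constant coefficient. Let S ⊆ k[[x₁,…,xₙ]] be the image of the continuous k-algebra substitution homomorphism k[[y₁,…,yₙ]] → k[[x₁,…,xₙ]] sending y₁ ↦ p and yⱼ ↦ xⱼ for j ≥ 2. Then k[[x₁,…,xₙ]] is generated as an S-module by 1, x₁, …, x₁^{a−1}; in particular k[[x₁,…,xₙ]] is a finite ring extension of its subring S. -/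
/-- The "slice" of `h ∈ k[[x₁,…,xₙ]]` along powers of the variable `x1`: writing
`h = Σ_m hₘ·x1^m` with `hₘ` not involving `x1`, `sliceAt x1 h m` is the series `hₘ`. -/
noncomputable def sliceAt {k : Type*} [Semiring k] {n : ℕ} (x1 : Fin n)
    (h : MvPowerSeries (Fin n) k) (m : ℕ) : MvPowerSeries (Fin n) k :=
  fun K => if K x1 = 0 then MvPowerSeries.coeff (K + Finsupp.single x1 m) h else 0

/-- Substitution of the power series `p` for the variable `x1` in `h`, all other variables
being kept fixed: in the notation above, `substAtX x1 p h = Σ_m hₘ·p^m`.  This is the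
value at `h` of the continuous `k`-algebra substitution homomorphism
`k[[y₁,…,yₙ]] → k[[x₁,…,xₙ]]`, `y₁ ↦ p`, `yⱼ ↦ xⱼ (j ≥ 2)`, provided `p` has zero constant
coefficient (so that only the finitely many terms with `m ≤ |K|` contribute to the
coefficient of a given monomial `x^K`). -/
noncomputable def substAtX {k : Type*} [CommSemiring k] {n : ℕ} (x1 : Fin n)
    (p : MvPowerSeries (Fin n) k) (h : MvPowerSeries (Fin n) k) : MvPowerSeries (Fin n) k :=
  fun K => ∑ m ∈ Finset.range (K.sum (fun _ e => e) + 1),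
    MvPowerSeries.coeff K (sliceAt x1 h m * p ^ m)

namespace WDiv14

variable {n : ℕ}

/-- weight: x1 ↦ 1, other variables ↦ W+1 -/
def wt (x1 : Fin n) (W : ℕ) (K : Fin n →₀ ℕ) : ℕ :=
  K.sum fun j e => if j = x1 then e else (W+1)*e

lemma wt_add (x1 : Fin n) (W : ℕ) (K L : Fin n →₀ ℕ) :
    wt x1 W (K + L) = wt x1 W K + wt x1 W L := by
  unfold wt
  apply Finsupp.sum_add_index' <;> intro j <;> split <;> simp [mul_add]

lemma wt_single (x1 : Fin n) (W m : ℕ) : wt x1 W (Finsupp.single x1 m) = m := by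
  unfold wt
  rw [Finsupp.sum_single_index] <;> simp

lemma wt_zero (x1 : Fin n) (W : ℕ) : wt x1 W 0 = 0 := by simp [wt]

lemma eq_zero_of_wt_eq_zero {x1 : Fin n} {W : ℕ} {K : Fin n →₀ ℕ}
    (h : wt x1 W K = 0) : K = 0 := by
  by_contra hK
  obtain ⟨j, hj⟩ := Finsupp.ne_iff.mp hK
  simp only [Finsupp.coe_zero, Pi.zero_apply] at hj
  have hmem : j ∈ K.support := Finsupp.mem_support_iff.mpr hj
  have : (if j = x1 then K j else (W+1) * K j) ≤ wt x1 W K :=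
    Finset.single_le_sum (f := fun j => if j = x1 then K j else (W+1)*K j)
      (fun _ _ => Nat.zero_le _) hmem
  rw [h] at this
  have h0 : (if j = x1 then K j else (W+1) * K j) = 0 := by omega
  by_cases hjx : j = x1
  · rw [if_pos hjx] at h0; exact hj h0
  · rw [if_neg hjx, Nat.mul_eq_zero] at h0; omega

lemma le_wt_of_ne {x1 : Fin n} {W : ℕ} {K : Fin n →₀ ℕ}
    (h0 : K x1 = 0) (hK : K ≠ 0) : W + 1 ≤ wt x1 W K := by
  obtain ⟨j, hj⟩ := Finsupp.ne_iff.mp hK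
  simp only [Finsupp.coe_zero, Pi.zero_apply] at hj
  have hjx : j ≠ x1 := by rintro rfl; exact hj h0
  have hmem : j ∈ K.support := Finsupp.mem_support_iff.mpr hj
  have : (if j = x1 then K j else (W+1) * K j) ≤ wt x1 W K :=
    Finset.single_le_sum (f := fun j => if j = x1 then K j else (W+1)*K j)
      (fun _ _ => Nat.zero_le _) hmem
  rw [if_neg hjx] at this
  have : (W+1) * 1 ≤ (W+1) * K j := Nat.mul_le_mul_left _ (by omega)
  omega

lemma wt_erase_add (x1 : Fin n) (W : ℕ) (K : Fin n →₀ ℕ) :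
    wt x1 W K = wt x1 W (K.erase x1) + K x1 := by
  conv_lhs => rw [← Finsupp.erase_add_single x1 K]
  rw [wt_add, wt_single]

/-- total degree -/
def deg (K : Fin n →₀ ℕ) : ℕ := K.sum fun _ e => e

lemma deg_add (K L : Fin n →₀ ℕ) : deg (K + L) = deg K + deg L := by
  unfold deg; exact Finsupp.sum_add_index' (fun _ => rfl) (fun _ _ _ => rfl)

lemma eq_zero_of_deg_eq_zero {K : Fin n →₀ ℕ} (h : deg K = 0) : K = 0 := by
  by_contra hK
  obtain ⟨j, hj⟩ := Finsupp.ne_iff.mp hK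
  simp only [Finsupp.coe_zero, Pi.zero_apply] at hj
  have : K j ≤ deg K := Finset.single_le_sum (f := fun j => K j)
    (fun _ _ => Nat.zero_le _) (Finsupp.mem_support_iff.mpr hj)
  omega

lemma apply_le_deg (K : Fin n →₀ ℕ) (j : Fin n) : K j ≤ deg K := by
  by_cases hj : K j = 0
  · omega
  · exact Finset.single_le_sum (f := fun j => K j) (fun _ _ => Nat.zero_le _)
      (Finsupp.mem_support_iff.mpr hj)


variable {k : Type*} [Field k]

section P

variable (x1 : Fin n) (a b : ℕ) (u : k) (p : MvPowerSeries (Fin n) k)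

lemma constCoeff (hb : 0 < b)
    (Hd : ∀ K, wt x1 a K ≤ b →
      MvPowerSeries.coeff K p = if K = Finsupp.single x1 b then u else 0) :
    MvPowerSeries.coeff (0 : Fin n →₀ ℕ) p = 0 := by
  rw [Hd 0 (by rw [wt_zero]; omega), if_neg]
  intro h
  have := congrArg (fun K : Fin n →₀ ℕ => K x1) h
  simp [Finsupp.single_eq_same] at this
  omega

lemma deg_pow (hb : 0 < b)
    (Hd : ∀ K, wt x1 a K ≤ b →
      MvPowerSeries.coeff K p = if K = Finsupp.single x1 b then u else 0) :
    ∀ m K, deg K < m → MvPowerSeries.coeff K (p ^ m) = 0 := by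
  intro m
  induction m with
  | zero => intro K h; omega
  | succ m ih =>
    intro K h
    rw [pow_succ, MvPowerSeries.coeff_mul]
    apply Finset.sum_eq_zero
    rintro ⟨A, B⟩ hAB
    rw [Finset.HasAntidiagonal.mem_antidiagonal] at hAB
    by_cases hB : B = 0
    · subst hB
      rw [constCoeff x1 a b u p hb Hd, mul_zero]
    · have hdB : 1 ≤ deg B := by
        rcases Nat.eq_zero_or_pos (deg B) with h0 | h0
        · exact absurd (eq_zero_of_deg_eq_zero h0) hB
        · exact h0
      have hdA : deg A < m := by
        have := deg_add A B
        rw [hAB] at this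
        omega
      rw [ih A hdA, zero_mul]

lemma coeff_pow (hb : 0 < b)
    (Hd : ∀ K, wt x1 a K ≤ b →
      MvPowerSeries.coeff K p = if K = Finsupp.single x1 b then u else 0) :
    ∀ m K, wt x1 a K ≤ m * b →
      MvPowerSeries.coeff K (p ^ m) = if K = Finsupp.single x1 (m * b) then u ^ m else 0 := by
  intro m
  induction m with
  | zero =>
    intro K h
    have hK : K = 0 := eq_zero_of_wt_eq_zero (Nat.le_zero.mp (by simpa using h))
    subst hK
    simp [MvPowerSeries.coeff_one, Finsupp.single_zero, eq_comm]
  | succ m ih =>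
    intro K h
    have hmb : (m + 1) * b = m * b + b := by ring
    rw [pow_succ, MvPowerSeries.coeff_mul]
    have step : ∀ P ∈ Finset.HasAntidiagonal.antidiagonal K,
        MvPowerSeries.coeff P.1 (p ^ m) * MvPowerSeries.coeff P.2 p
        = if P = (Finsupp.single x1 (m * b), Finsupp.single x1 b) then u ^ (m + 1) else 0 := by
      rintro ⟨A, B⟩ hAB
      rw [Finset.HasAntidiagonal.mem_antidiagonal] at hAB
      have hw : wt x1 a A + wt x1 a B ≤ m * b + b := by
        rw [← wt_add, hAB, ← hmb]; exact h
      by_cases hA : wt x1 a A ≤ m * b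
      · rw [ih A hA]
        by_cases hA2 : A = Finsupp.single x1 (m * b)
        · subst hA2
          rw [if_pos rfl]
          have hwB : wt x1 a B ≤ b := by
            rw [wt_single] at hw; omega
          rw [Hd B hwB]
          by_cases hB2 : B = Finsupp.single x1 b
          · subst hB2
            rw [if_pos rfl, if_pos rfl, pow_succ]
          · rw [if_neg hB2, mul_zero, if_neg (fun hP => hB2 (congrArg Prod.snd hP))]
        · rw [if_neg hA2, zero_mul, if_neg (fun hP => hA2 (congrArg Prod.fst hP))]
      · have hwB : wt x1 a B ≤ b := by omega
        have hBne : B ≠ Finsupp.single x1 b := by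
          intro hB2
          rw [hB2, wt_single] at hw
          omega
        rw [Hd B hwB, if_neg hBne, mul_zero,
          if_neg (fun hP => hBne (congrArg Prod.snd hP))]
    rw [Finset.sum_congr rfl step, Finset.sum_ite_eq' (Finset.HasAntidiagonal.antidiagonal K)]
    have hmem : (Finsupp.single x1 (m * b), Finsupp.single x1 b) ∈ Finset.HasAntidiagonal.antidiagonal K
        ↔ K = Finsupp.single x1 ((m + 1) * b) := by
      rw [Finset.HasAntidiagonal.mem_antidiagonal, ← Finsupp.single_add, hmb, eq_comm]
    by_cases hK : K = Finsupp.single x1 ((m + 1) * b)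
    · rw [if_pos (hmem.mpr hK), if_pos hK]
    · rw [if_neg (fun hm => hK (hmem.mp hm)), if_neg hK]

end P


section Main

variable (x1 : Fin n) (a b : ℕ) (u : k) (p : MvPowerSeries (Fin n) k)

noncomputable def hOf (v : (Fin n →₀ ℕ) → k) (i : ℕ) : MvPowerSeries (Fin n) k :=
  fun L => if i < b then v (L.erase x1 + Finsupp.single x1 (b * L x1 + i)) else 0

noncomputable def G (v : (Fin n →₀ ℕ) → k) : MvPowerSeries (Fin n) k :=
  ∑ i : Fin a, substAtX x1 p (hOf x1 b v (i : ℕ)) * MvPowerSeries.X x1 ^ (i : ℕ)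

lemma sliceAt_add (h h' : MvPowerSeries (Fin n) k) (m : ℕ) :
    sliceAt x1 (h + h') m = sliceAt x1 h m + sliceAt x1 h' m := by
  apply MvPowerSeries.ext
  intro K
  rw [map_add, MvPowerSeries.coeff_apply, MvPowerSeries.coeff_apply, MvPowerSeries.coeff_apply]
  simp only [sliceAt]
  split
  · rw [map_add]
  · simp

lemma substAtX_add (h h' : MvPowerSeries (Fin n) k) :
    substAtX x1 p (h + h') = substAtX x1 p h + substAtX x1 p h' := by
  apply MvPowerSeries.ext
  intro K
  rw [map_add, MvPowerSeries.coeff_apply, MvPowerSeries.coeff_apply, MvPowerSeries.coeff_apply]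
  simp only [substAtX]
  rw [← Finset.sum_add_distrib]
  apply Finset.sum_congr rfl
  intro m _
  rw [sliceAt_add, add_mul, map_add]

lemma hOf_add (v w : (Fin n →₀ ℕ) → k) (i : ℕ) :
    hOf x1 b (v + w) i = hOf x1 b v i + hOf x1 b w i := by
  apply MvPowerSeries.ext
  intro K
  rw [map_add, MvPowerSeries.coeff_apply, MvPowerSeries.coeff_apply, MvPowerSeries.coeff_apply]
  simp only [hOf]
  split
  · rfl
  · simp

lemma G_add (v w : (Fin n →₀ ℕ) → k) :
    G x1 a b p (v + w) = G x1 a b p v + G x1 a b p w := by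
  unfold G
  rw [← Finset.sum_add_distrib]
  apply Finset.sum_congr rfl
  intro i _
  rw [hOf_add, substAtX_add, add_mul]

lemma div_mod_helper {b s i : ℕ} (hb : 0 < b) (h1 : i < b) (h2 : s % b = 0) :
    (s + i) % b = i ∧ (s + i) / b = s / b := by
  obtain ⟨q, rfl⟩ := Nat.dvd_of_mod_eq_zero h2
  constructor
  · rw [Nat.mul_add_mod, Nat.mod_eq_of_lt h1]
  · rw [Nat.mul_add_div hb, Nat.div_eq_of_lt h1, add_zero]
    exact (Nat.mul_div_cancel_left q hb).symm

lemma coeff_sliceAt_ne (h : MvPowerSeries (Fin n) k) (m : ℕ) (A : Fin n →₀ ℕ)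
    (hA0 : A x1 ≠ 0) : MvPowerSeries.coeff A (sliceAt x1 h m) = 0 := by
  rw [MvPowerSeries.coeff_apply]
  simp only [sliceAt]
  rw [if_neg hA0]

lemma coeff_sliceAt_hOf (v : (Fin n →₀ ℕ) → k) (i m : ℕ) (A : Fin n →₀ ℕ)
    (hA0 : A x1 = 0) :
    MvPowerSeries.coeff A (sliceAt x1 (hOf x1 b v i) m)
      = if i < b then v (A + Finsupp.single x1 (b * m + i)) else 0 := by
  rw [MvPowerSeries.coeff_apply]
  simp only [sliceAt]
  rw [if_pos hA0, MvPowerSeries.coeff_apply]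
  simp only [hOf]
  have hLx : (A + Finsupp.single x1 m) x1 = m := by simp [hA0]
  have hLe : (A + Finsupp.single x1 m).erase x1 = A := by
    rw [Finsupp.erase_add, Finsupp.erase_single, add_zero]
    ext j
    by_cases hj : j = x1
    · subst hj; rw [Finsupp.erase_same, hA0]
    · rw [Finsupp.erase_ne hj]
  rw [hLx, hLe]

lemma coeff_term_diag (hb : 0 < b)
    (Hd : ∀ K, wt x1 a K ≤ b →
      MvPowerSeries.coeff K p = if K = Finsupp.single x1 b then u else 0)
    (v : (Fin n →₀ ℕ) → k) (K : Fin n →₀ ℕ)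
    (hv : ∀ K', wt x1 a K' < wt x1 a K → v K' = 0) (i : ℕ) :
    MvPowerSeries.coeff K (substAtX x1 p (hOf x1 b v i) * MvPowerSeries.X x1 ^ i)
      = if i = K x1 % b then u ^ (K x1 / b) * v K else 0 := by
  rw [MvPowerSeries.X_pow_eq, MvPowerSeries.coeff_mul_monomial]
  by_cases hi : Finsupp.single x1 i ≤ K
  swap
  · rw [if_neg hi, if_neg]
    intro h
    exact hi (Finsupp.single_le_iff.mpr (h ▸ Nat.mod_le (K x1) b))
  rw [if_pos hi, mul_one]
  set K' := K - Finsupp.single x1 i with hK'def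
  have hK'A : K' + Finsupp.single x1 i = K := tsub_add_cancel_of_le hi
  have hx : K' x1 + i = K x1 := by
    have := congrArg (fun F : Fin n →₀ ℕ => F x1) hK'A
    simpa using this
  have hwK : wt x1 a K = wt x1 a K' + i := by
    rw [← hK'A, wt_add, wt_single]
  have hKrepr : K'.erase x1 + Finsupp.single x1 (K' x1 + i) = K := by
    rw [Finsupp.single_add, ← add_assoc, Finsupp.erase_add_single, hK'A]
  set m0 := K' x1 / b with hm0
  rw [MvPowerSeries.coeff_apply]
  simp only [substAtX]
  have hterm : ∀ m ∈ Finset.range (K'.sum (fun _ e => e) + 1),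
      MvPowerSeries.coeff K' (sliceAt x1 (hOf x1 b v i) m * p ^ m)
        = if i < b ∧ m = m0 ∧ K' x1 % b = 0 then u ^ m * v K else 0 := by
    intro m _
    rw [MvPowerSeries.coeff_mul]
    have hpt : ∀ P ∈ Finset.HasAntidiagonal.antidiagonal K',
        MvPowerSeries.coeff P.1 (sliceAt x1 (hOf x1 b v i) m)
            * MvPowerSeries.coeff P.2 (p ^ m)
          = if P = (K'.erase x1, Finsupp.single x1 (m * b)) ∧ i < b ∧ m = m0 ∧ K' x1 % b = 0
            then u ^ m * v K else 0 := by
      rintro ⟨A, B⟩ hAB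
      rw [Finset.HasAntidiagonal.mem_antidiagonal] at hAB
      dsimp only at hAB ⊢
      by_cases hA0 : A x1 = 0
      swap
      · rw [coeff_sliceAt_ne x1 (hOf x1 b v i) m A hA0, zero_mul, if_neg]
        rintro ⟨hP, -⟩
        apply hA0
        have hA : A = K'.erase x1 := congrArg Prod.fst hP
        rw [hA, Finsupp.erase_same]
      rw [coeff_sliceAt_hOf x1 b v i m A hA0]
      by_cases hib : i < b
      swap
      · rw [if_neg hib, zero_mul, if_neg]
        rintro ⟨-, hib', -⟩
        exact hib hib'
      rw [if_pos hib]
      by_cases hwB : wt x1 a B ≤ m * b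
      swap
      · have hvz : v (A + Finsupp.single x1 (b * m + i)) = 0 := by
          apply hv
          rw [wt_add, wt_single, hwK, ← hAB, wt_add]
          have : b * m = m * b := by ring
          omega
        rw [hvz, zero_mul, if_neg]
        rintro ⟨hP, -⟩
        have hB : B = Finsupp.single x1 (m * b) := congrArg Prod.snd hP
        rw [hB, wt_single] at hwB
        omega
      rw [coeff_pow x1 a b u p hb Hd m B hwB]
      by_cases hB2 : B = Finsupp.single x1 (m * b)
      swap
      · rw [if_neg hB2, mul_zero, if_neg]
        rintro ⟨hP, -⟩
        exact hB2 (congrArg Prod.snd hP)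
      subst hB2
      have hKb : K' x1 = m * b := by
        have := congrArg (fun F : Fin n →₀ ℕ => F x1) hAB
        simp only [Finsupp.add_apply, Finsupp.single_eq_same] at this
        omega
      have hAer : A = K'.erase x1 := by
        ext j
        by_cases hj : j = x1
        · subst hj; rw [Finsupp.erase_same, hA0]
        · rw [Finsupp.erase_ne hj, ← hAB, Finsupp.add_apply,
            Finsupp.single_apply, if_neg (fun hx1 => hj hx1.symm), add_zero]
      have hm : m = m0 := by
        rw [hm0, hKb, Nat.mul_div_cancel m hb]
      have hmod : K' x1 % b = 0 := by rw [hKb, Nat.mul_mod_left]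
      have hPP : (A, (Finsupp.single x1 (m * b) : Fin n →₀ ℕ))
          = (K'.erase x1, Finsupp.single x1 (m * b)) := by rw [hAer]
      have hcond : (A, (Finsupp.single x1 (m * b) : Fin n →₀ ℕ))
            = (K'.erase x1, Finsupp.single x1 (m * b)) ∧ i < b ∧ m = m0 ∧ K' x1 % b = 0 :=
        ⟨hPP, hib, hm, hmod⟩
      rw [if_pos hcond]
      have harg : A + Finsupp.single x1 (b * m + i) = K := by
        rw [hAer, ← hKrepr, hKb]
        congr 2
        ring
      rw [harg, mul_comm]
      rw [if_pos rfl]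
    rw [Finset.sum_congr rfl hpt]
    by_cases hC : i < b ∧ m = m0 ∧ K' x1 % b = 0
    · rw [Finset.sum_congr rfl (fun P _ => if_congr (and_iff_left hC) rfl rfl),
        Finset.sum_ite_eq' (Finset.HasAntidiagonal.antidiagonal K'), if_pos, if_pos hC]
      rw [Finset.HasAntidiagonal.mem_antidiagonal]
      have hmb : m * b = K' x1 := by
        rw [hC.2.1, hm0]
        exact Nat.div_mul_cancel (Nat.dvd_of_mod_eq_zero hC.2.2)
      rw [hmb, Finsupp.erase_add_single]
    · rw [Finset.sum_eq_zero, if_neg hC]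
      intro P _
      rw [if_neg]
      rintro ⟨-, h2⟩
      exact hC h2
  rw [Finset.sum_congr rfl hterm]
  by_cases hD : i < b ∧ K' x1 % b = 0
  · have hmods := div_mod_helper hb hD.1 hD.2
    rw [hx] at hmods
    rw [Finset.sum_congr rfl (fun m _ => if_congr
        (by constructor
            · rintro ⟨-, h2, -⟩; exact h2
            · intro h2; exact ⟨hD.1, h2, hD.2⟩) rfl rfl),
      Finset.sum_ite_eq' (Finset.range _) m0, if_pos, if_pos]
    · rw [hmods.2]
    · omega
    · rw [Finset.mem_range, Nat.lt_succ_iff, hm0]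
      exact le_trans (Nat.div_le_self _ _) (apply_le_deg K' x1)
  · rw [Finset.sum_eq_zero, if_neg]
    · intro hmod
      apply hD
      have hib : i < b := hmod ▸ Nat.mod_lt _ hb
      refine ⟨hib, ?_⟩
      have hdm := Nat.div_add_mod (K x1) b
      have : K' x1 = b * (K x1 / b) := by omega
      rw [this, Nat.mul_mod_right]
    · intro m _
      rw [if_neg]
      rintro ⟨h1, -, h3⟩
      exact hD ⟨h1, h3⟩

lemma coeff_G_diag (hb : 0 < b) (hba : b ≤ a)
    (Hd : ∀ K, wt x1 a K ≤ b →
      MvPowerSeries.coeff K p = if K = Finsupp.single x1 b then u else 0)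
    (v : (Fin n →₀ ℕ) → k) (K : Fin n →₀ ℕ)
    (hv : ∀ K', wt x1 a K' < wt x1 a K → v K' = 0) :
    MvPowerSeries.coeff K (G x1 a b p v) = u ^ (K x1 / b) * v K := by
  unfold G
  rw [map_sum]
  have hrb : K x1 % b < a := lt_of_lt_of_le (Nat.mod_lt _ hb) hba
  have hiff : ∀ i : Fin a, ((i : ℕ) = K x1 % b) ↔ (i = (⟨K x1 % b, hrb⟩ : Fin a)) := by
    intro i
    constructor
    · intro h; exact Fin.ext h
    · intro h; rw [h]
  have h1 : ∑ i : Fin a, MvPowerSeries.coeff K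
        (substAtX x1 p (hOf x1 b v (i : ℕ)) * MvPowerSeries.X x1 ^ (i : ℕ))
      = ∑ i : Fin a, if i = (⟨K x1 % b, hrb⟩ : Fin a) then u ^ (K x1 / b) * v K else 0 :=
    Finset.sum_congr rfl (fun i _ =>
      (coeff_term_diag x1 a b u p hb Hd v K hv (i : ℕ)).trans (if_congr (hiff i) rfl rfl))
  rw [h1, Finset.sum_ite_eq' Finset.univ, if_pos (Finset.mem_univ _)]

variable (g : MvPowerSeries (Fin n) k)

noncomputable def vals : ℕ → ((Fin n →₀ ℕ) → k)
  | 0 => fun _ => 0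
  | d+1 => fun K =>
      if wt x1 a K < d then vals d K
      else if wt x1 a K = d then
        (u ^ (K x1 / b))⁻¹
          * (MvPowerSeries.coeff K g - MvPowerSeries.coeff K (G x1 a b p (vals d)))
      else 0

noncomputable def val (K : Fin n →₀ ℕ) : k := vals x1 a b u p g (wt x1 a K + 1) K

lemma vals_ge : ∀ d K, d ≤ wt x1 a K → vals x1 a b u p g d K = 0 := by
  intro d
  induction d with
  | zero => intro K _; rfl
  | succ d _ =>
    intro K hK
    show (if wt x1 a K < d then _ else if wt x1 a K = d then _ else _) = 0
    rw [if_neg (by omega), if_neg (by omega)]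

lemma vals_lt : ∀ d K, wt x1 a K < d → vals x1 a b u p g d K = val x1 a b u p g K := by
  intro d
  induction d with
  | zero => intro K hK; omega
  | succ d ih =>
    intro K hK
    show (if wt x1 a K < d then _ else if wt x1 a K = d then _ else _) = _
    by_cases h1 : wt x1 a K < d
    · rw [if_pos h1]; exact ih K h1
    · have h2 : wt x1 a K = d := by omega
      rw [if_neg h1, if_pos h2]
      show _ = vals x1 a b u p g (wt x1 a K + 1) K
      rw [h2]
      show _ = (if wt x1 a K < d then _ else if wt x1 a K = d then _ else _)
      rw [if_neg h1, if_pos h2]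

lemma coeff_G_val (hb : 0 < b) (hba : b ≤ a) (hu : u ≠ 0)
    (Hd : ∀ K, wt x1 a K ≤ b →
      MvPowerSeries.coeff K p = if K = Finsupp.single x1 b then u else 0)
    (K : Fin n →₀ ℕ) :
    MvPowerSeries.coeff K (G x1 a b p (val x1 a b u p g)) = MvPowerSeries.coeff K g := by
  set d := wt x1 a K with hd
  set w : (Fin n →₀ ℕ) → k := fun K' => val x1 a b u p g K' - vals x1 a b u p g d K' with hw
  have hsplit : val x1 a b u p g = vals x1 a b u p g d + w := by
    funext K'
    simp [hw]
  have hwlow : ∀ K', wt x1 a K' < wt x1 a K → w K' = 0 := by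
    intro K' hK'
    simp only [hw]
    rw [vals_lt x1 a b u p g d K' hK', sub_self]
  rw [hsplit, G_add, map_add, coeff_G_diag x1 a b u p hb hba Hd w K hwlow]
  have hwK : w K = val x1 a b u p g K := by
    simp only [hw]
    rw [vals_ge x1 a b u p g d K (le_of_eq hd.symm), sub_zero]
  rw [hwK]
  have hvalK : val x1 a b u p g K = (u ^ (K x1 / b))⁻¹
      * (MvPowerSeries.coeff K g - MvPowerSeries.coeff K (G x1 a b p (vals x1 a b u p g d))) := by
    show (if wt x1 a K < d then _ else if wt x1 a K = d then _ else _) = _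
    rw [if_neg (by omega), if_pos hd.symm]
  rw [hvalK, ← mul_assoc, mul_inv_cancel₀ (pow_ne_zero _ hu), one_mul]
  ring

end Main

end WDiv14

/-- Let `p = x₁^a + Σ_{i<a} cᵢ(x₂,…,xₙ)·x₁^i` with `a ≥ 1` and `c₀` without constant term,
and let `S ⊆ k[[x₁,…,xₙ]]` be the image of the substitution homomorphism `y₁ ↦ p`,
`yⱼ ↦ xⱼ`.  Then `k[[x₁,…,xₙ]]` is generated as an `S`-module by `1, x₁, …, x₁^{a-1}`:
every `g` is an `S`-linear combination `g = Σ_{i<a} σ(hᵢ)·x₁^i`; in particular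
`k[[x₁,…,xₙ]]` is a finite ring extension of `S`. -/
theorem stmt14 {k : Type*} [Field k] (n : ℕ) (hn : 0 < n) (a : ℕ) (ha : 0 < a)
    (c : Fin a → MvPowerSeries (Fin n) k)
    (hc : ∀ i, ∀ K : Fin n →₀ ℕ, K ⟨0, hn⟩ ≠ 0 → MvPowerSeries.coeff K (c i) = 0)
    (hc0 : MvPowerSeries.constantCoeff (c ⟨0, ha⟩) = 0)
    (p : MvPowerSeries (Fin n) k)
    (hp : p = (MvPowerSeries.X ⟨0, hn⟩) ^ a
        + ∑ i : Fin a, c i * (MvPowerSeries.X ⟨0, hn⟩) ^ (i : ℕ)) :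
    ∀ g : MvPowerSeries (Fin n) k, ∃ h : Fin a → MvPowerSeries (Fin n) k,
      g = ∑ i : Fin a, substAtX ⟨0, hn⟩ p (h i) * (MvPowerSeries.X ⟨0, hn⟩) ^ (i : ℕ) := by
  classical
  intro g
  set x1 : Fin n := ⟨0, hn⟩ with hx1
  have hPex : ∃ j, (j = a ∨ ∃ hj : j < a,
      MvPowerSeries.constantCoeff (c ⟨j, hj⟩) ≠ 0) := ⟨a, Or.inl rfl⟩
  set b := Nat.find hPex with hbdef
  have hPb := Nat.find_spec hPex
  rw [← hbdef] at hPb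
  have hba : b ≤ a := Nat.find_le (Or.inl rfl)
  have hb : 0 < b := by
    rcases Nat.eq_zero_or_pos b with h0 | h0
    · exfalso
      rw [h0] at hPb
      rcases hPb with h | ⟨hj, hne⟩
      · omega
      · exact hne hc0
    · exact h0
  have hmin : ∀ i : Fin a, MvPowerSeries.constantCoeff (c i) ≠ 0 → b ≤ (i : ℕ) := by
    intro i hne
    by_contra hlt
    exact Nat.find_min hPex (by omega) (Or.inr ⟨i.2, hne⟩)
  set u := if hlt : b < a then MvPowerSeries.constantCoeff (c ⟨b, hlt⟩) else 1
    with hu_def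
  have hu : u ≠ 0 := by
    rw [hu_def]
    split
    · rcases hPb with h | ⟨hj, hne⟩
      · omega
      · exact hne
    · exact one_ne_zero
  have Hd : ∀ K, WDiv14.wt x1 a K ≤ b →
      MvPowerSeries.coeff K p = if K = Finsupp.single x1 b then u else 0 := by
    intro K hwK
    rw [hp, map_add, map_sum]
    have hX : MvPowerSeries.coeff K (MvPowerSeries.X x1 ^ a : MvPowerSeries (Fin n) k)
        = if b = a ∧ K = Finsupp.single x1 b then 1 else 0 := by
      rw [MvPowerSeries.coeff_X_pow]
      by_cases hK : K = Finsupp.single x1 a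
      · rw [if_pos hK]
        have hwa : WDiv14.wt x1 a K = a := by rw [hK, WDiv14.wt_single]
        have hab : b = a := by omega
        rw [if_pos ⟨hab, by rw [hK, hab]⟩]
      · rw [if_neg hK, if_neg]
        rintro ⟨hab, hKs⟩
        exact hK (by rw [hKs, hab])
    have hterm : ∀ i : Fin a, MvPowerSeries.coeff K (c i * MvPowerSeries.X x1 ^ (i : ℕ))
        = if ((i : ℕ) = b ∧ K = Finsupp.single x1 b) then
            MvPowerSeries.constantCoeff (c i) else 0 := by
      intro i
      rw [MvPowerSeries.X_pow_eq, MvPowerSeries.coeff_mul_monomial]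
      by_cases hi : Finsupp.single x1 (i : ℕ) ≤ K
      swap
      · rw [if_neg hi, if_neg]
        rintro ⟨h1, h2⟩
        apply hi
        rw [h2, h1]
      rw [if_pos hi, mul_one]
      set K' := K - Finsupp.single x1 (i : ℕ) with hK'def
      have hK'A : K' + Finsupp.single x1 (i : ℕ) = K := tsub_add_cancel_of_le hi
      have hxx : K' x1 + (i : ℕ) = K x1 := by
        have := congrArg (fun F : Fin n →₀ ℕ => F x1) hK'A
        simpa using this
      have hw : WDiv14.wt x1 a K = WDiv14.wt x1 a K' + (i : ℕ) := by
        rw [← hK'A, WDiv14.wt_add, WDiv14.wt_single]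
      by_cases hx0 : K' x1 = 0
      swap
      · rw [hc i K' hx0, if_neg]
        rintro ⟨h1, h2⟩
        apply hx0
        rw [h2] at hxx
        rw [Finsupp.single_eq_same] at hxx
        omega
      by_cases hK'0 : K' = 0
      · rw [hK'0] at hK'A
        have hKs : K = Finsupp.single x1 (i : ℕ) := by rw [← hK'A, zero_add]
        rw [hK'0]
        by_cases hcc : MvPowerSeries.constantCoeff (c i) = 0
        · rw [show (MvPowerSeries.coeff (0 : Fin n →₀ ℕ)) (c i)
              = MvPowerSeries.constantCoeff (c i) from rfl, hcc]
          split <;> rfl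
        · have hbi : b ≤ (i : ℕ) := hmin i hcc
          have hwi : WDiv14.wt x1 a K = (i : ℕ) := by rw [hKs, WDiv14.wt_single]
          have hib : (i : ℕ) = b := by omega
          rw [if_pos ⟨hib, by rw [hKs, hib]⟩]
          rfl
      · exfalso
        have := WDiv14.le_wt_of_ne (x1 := x1) (W := a) hx0 hK'0
        omega
    have hsum : ∑ i : Fin a, MvPowerSeries.coeff K (c i * MvPowerSeries.X x1 ^ (i : ℕ))
        = if (b < a ∧ K = Finsupp.single x1 b) then u else 0 := by
      by_cases hlt : b < a
      · have h2 : ∀ i : Fin a, MvPowerSeries.coeff K (c i * MvPowerSeries.X x1 ^ (i : ℕ))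
            = if i = (⟨b, hlt⟩ : Fin a) then (if K = Finsupp.single x1 b then u else 0) else 0 := by
          intro i
          rw [hterm i]
          by_cases hieq : i = (⟨b, hlt⟩ : Fin a)
          · subst hieq
            rw [if_pos rfl]
            by_cases hKs : K = Finsupp.single x1 b
            · rw [if_pos ⟨rfl, hKs⟩, if_pos hKs, hu_def, dif_pos hlt]
            · rw [if_neg (fun hh => hKs hh.2), if_neg hKs]
          · rw [if_neg hieq, if_neg]
            rintro ⟨h1, -⟩
            exact hieq (Fin.ext h1)
        rw [Finset.sum_congr rfl (fun i _ => h2 i), Finset.sum_ite_eq' Finset.univ,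
          if_pos (Finset.mem_univ _)]
        by_cases hKs : K = Finsupp.single x1 b
        · rw [if_pos hKs, if_pos ⟨hlt, hKs⟩]
        · rw [if_neg hKs, if_neg (fun hh => hKs hh.2)]
      · rw [Finset.sum_eq_zero, if_neg (fun hh => hlt hh.1)]
        intro i _
        rw [hterm i, if_neg]
        rintro ⟨h1, -⟩
        have := i.2
        omega
    rw [hX, hsum]
    by_cases hKs : K = Finsupp.single x1 b
    · by_cases hlt : b < a
      · rw [if_neg (fun hh => by omega : ¬(b = a ∧ K = Finsupp.single x1 b)),
          if_pos ⟨hlt, hKs⟩, if_pos hKs, zero_add]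
      · have hab : b = a := by omega
        rw [if_pos ⟨hab, hKs⟩, if_neg (fun hh => hlt hh.1), if_pos hKs, add_zero,
          hu_def, dif_neg hlt]
    · rw [if_neg (fun hh => hKs hh.2), if_neg (fun hh => hKs hh.2), if_neg hKs, add_zero]
  refine ⟨fun i => WDiv14.hOf x1 b (WDiv14.val x1 a b u p g) (i : ℕ), ?_⟩
  show g = WDiv14.G x1 a b p (WDiv14.val x1 a b u p g)
  apply MvPowerSeries.ext
  intro K
  exact (WDiv14.coeff_G_val x1 a b u p g hb hba hu Hd K).symm
end

section
/- Let k be a field and α₁,…,αₙ ∈ kˣ such that ∏ᵢ αᵢ^{Kᵢ} ≠ 1 for every nonzero multi-index K ∈ ℕⁿ. Let φ be the scaling automorphism of k[[x₁,…,xₙ]] with φ(xᵢ) = αᵢ·xᵢ. Then for every unit u of k[[x₁,…,xₙ]] there exists a power series h ∈ k[[x₁,…,xₙ]] with constant coefficient 1 such that u·φ(h) = u₀·h, where u₀ ∈ kˣ is the constant coefficient of u; equivalently, u = u₀·h/φ(h). -/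
noncomputable def hcoef {k : Type*} [Field k] {n : ℕ} (α : Fin n → kˣ)
    (u : MvPowerSeries (Fin n) k) (K : Fin n →₀ ℕ) : k :=
  if K = 0 then 1 else
    ((MvPowerSeries.constantCoeff (σ := Fin n) (R := k) u) * (1 - ∏ i, (α i : k) ^ K i))⁻¹ *
    ∑ p ∈ ((Finset.HasAntidiagonal.antidiagonal K).filter (fun p => p.2 ≠ K)).attach,
      MvPowerSeries.coeff (R := k) p.1.1 u * (∏ i, (α i : k) ^ (p.1.2) i) * hcoef α u p.1.2
termination_by Finsupp.degree K
decreasing_by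
  obtain ⟨p, hp⟩ := p
  simp only [Finset.mem_filter, Finset.HasAntidiagonal.mem_antidiagonal] at hp
  obtain ⟨hsum, hne⟩ := hp
  have h1 : Finsupp.degree p.1 + Finsupp.degree p.2 = Finsupp.degree K := by
    rw [← hsum]; simp [Finsupp.degree_eq_weight_one, map_add]
  show Finsupp.degree p.2 < Finsupp.degree K
  have h2 : p.1 ≠ 0 := by
    intro hz; rw [hz, zero_add] at hsum; exact hne hsum
  have h3 : 0 < Finsupp.degree p.1 := Nat.pos_of_ne_zero (by
    rw [Ne, Finsupp.degree_eq_zero_iff]; exact h2)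
  omega

theorem hcoef_zero {k : Type*} [Field k] {n : ℕ} (α : Fin n → kˣ)
    (u : MvPowerSeries (Fin n) k) : hcoef α u 0 = 1 := by
  rw [hcoef]; simp

theorem hcoef_ne {k : Type*} [Field k] {n : ℕ} (α : Fin n → kˣ)
    (u : MvPowerSeries (Fin n) k) (K : Fin n →₀ ℕ) (hK : K ≠ 0) :
    hcoef α u K =
      ((MvPowerSeries.constantCoeff (σ := Fin n) (R := k) u) * (1 - ∏ i, (α i : k) ^ K i))⁻¹ *
      ∑ p ∈ (Finset.HasAntidiagonal.antidiagonal K).filter (fun p => p.2 ≠ K),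
        MvPowerSeries.coeff (R := k) p.1 u * (∏ i, (α i : k) ^ (p.2) i) * hcoef α u p.2 := by
  rw [hcoef, if_neg hK,
    Finset.sum_attach ((Finset.HasAntidiagonal.antidiagonal K).filter (fun p => p.2 ≠ K))
      (fun p => MvPowerSeries.coeff (R := k) p.1 u * (∏ i, (α i : k) ^ (p.2) i) * hcoef α u p.2)]

/-- Let `k` be a field and `α₁,…,αₙ ∈ kˣ` such that `∏ᵢ αᵢ^{Kᵢ} ≠ 1` for every nonzero
multi-index `K`.  Let `φ` be the scaling automorphism of `k[[x₁,…,xₙ]]` with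
`φ(xᵢ) = αᵢ·xᵢ` (i.e. `(φg)_K = (∏ᵢ αᵢ^{Kᵢ})·g_K`).  Then for every unit `u` of
`k[[x₁,…,xₙ]]` there exists `h` with constant coefficient `1` such that
`u·φ(h) = u₀·h`, where `u₀` is the constant coefficient of `u`. -/
theorem stmt16 {k : Type*} [Field k] (n : ℕ) (α : Fin n → kˣ)
    (hα : ∀ K : Fin n →₀ ℕ, K ≠ 0 → (∏ i, (α i : k) ^ K i) ≠ 1)
    (φ : MvPowerSeries (Fin n) k ≃ₐ[k] MvPowerSeries (Fin n) k)
    (hφ : ∀ (g : MvPowerSeries (Fin n) k) (K : Fin n →₀ ℕ),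
      MvPowerSeries.coeff (R := k) K (φ g) = (∏ i, (α i : k) ^ K i) * MvPowerSeries.coeff (R := k) K g)
    (u : MvPowerSeries (Fin n) k) (hu : IsUnit u) :
    ∃ h : MvPowerSeries (Fin n) k,
      MvPowerSeries.constantCoeff (σ := Fin n) (R := k) h = 1 ∧
        u * φ h = MvPowerSeries.C (σ := Fin n) (R := k) (MvPowerSeries.constantCoeff (σ := Fin n) (R := k) u) * h := by
  classical
  set u₀ := MvPowerSeries.constantCoeff (σ := Fin n) (R := k) u with hu₀
  have hu0 : u₀ ≠ 0 := (MvPowerSeries.isUnit_constantCoeff u hu).ne_zero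
  set h : MvPowerSeries (Fin n) k := fun K => hcoef α u K with hh
  have hcoeff : ∀ K, MvPowerSeries.coeff (R := k) K h = hcoef α u K := fun K => rfl
  refine ⟨h, ?_, ?_⟩
  · show MvPowerSeries.coeff (R := k) 0 h = 1
    rw [hcoeff, hcoef_zero]
  · ext K
    rw [MvPowerSeries.coeff_mul, MvPowerSeries.coeff_C_mul, hcoeff]
    by_cases hK : K = 0
    · subst hK
      rw [hcoef_zero]
      simp [hφ, hcoef_zero, ← hu₀, show MvPowerSeries.constantCoeff (σ := Fin n) (R := k) h = 1 from hcoef_zero α u]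
    · have hc : (∏ i, (α i : k) ^ K i) ≠ 1 := hα K hK
      have hfilter : (Finset.HasAntidiagonal.antidiagonal K).filter (fun p => p.2 = K) = {(0, K)} := by
        ext p
        simp only [Finset.mem_filter, Finset.HasAntidiagonal.mem_antidiagonal, Finset.mem_singleton]
        constructor
        · rintro ⟨h1, h2⟩
          rw [h2] at h1
          have hp1 : p.1 = 0 := add_right_cancel (b := K) (c := (0 : Fin n →₀ ℕ))
            (h1.trans (zero_add K).symm)
          exact Prod.ext hp1 h2
        · rintro rfl; simp
      rw [← Finset.sum_filter_add_sum_filter_not (Finset.HasAntidiagonal.antidiagonal K) (fun p => p.2 = K),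
        hfilter, Finset.sum_singleton]
      have hSum : ∑ p ∈ (Finset.HasAntidiagonal.antidiagonal K).filter (fun p => ¬p.2 = K),
          MvPowerSeries.coeff (R := k) p.1 u * MvPowerSeries.coeff (R := k) p.2 (φ h)
          = u₀ * (1 - ∏ i, (α i : k) ^ K i) * hcoef α u K := by
        rw [hcoef_ne α u K hK, ← mul_assoc, mul_inv_cancel₀, one_mul]
        · apply Finset.sum_congr rfl
          intro p _
          rw [hφ, hcoeff]; ring
        · exact mul_ne_zero hu0 (sub_ne_zero_of_ne (Ne.symm hc))
      rw [hSum, hφ, hcoeff]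
      show u₀ * ((∏ i, (α i : k) ^ K i) * hcoef α u K) + _ = _
      ring
end

section
/- Let k be an algebraically closed field equipped with an absolute value v, let t > 1 be a real number, and let α₁,…,αₙ ∈ k satisfy v(αᵢ) = t for all i. Let φ be the scaling automorphism of k[[x₁,…,xₙ]] with φ(xᵢ) = αᵢ·xᵢ, and let I be a prime ideal of k[[x₁,…,xₙ]] with φ(I) = I which is contained in, but not equal to, the maximal ideal m = (x₁,…,xₙ). Then there exist λ₁,…,λₙ ∈ k, not all zero, such that I is contained in the kernel of the continuous k-algebra substitution homomorphism π : k[[x₁,…,xₙ]] → k[[x]] with π(xᵢ) = λᵢ·x (i.e. f(λ₁x,…,λₙx) = 0 for every f ∈ I); moreover there exists an integer N ≥ 1 such that αᵢ^N = αⱼ^N whenever λᵢ ≠ 0 and λⱼ ≠ 0. -/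
namespace Stmt18aux

open MvPowerSeries

variable {k : Type*} [Field k] {n : ℕ}

/-- total degree of an exponent vector -/
def deg (K : Fin n →₀ ℕ) : ℕ := ∑ l, K l

lemma deg_add (a b : Fin n →₀ ℕ) : deg (a + b) = deg a + deg b := by
  simp [deg, Finset.sum_add_distrib]

lemma deg_single (i : Fin n) (M : ℕ) : deg (Finsupp.single i M) = M := by
  simp [deg, Finsupp.single_apply]

/-- The ideal of power series of order at least `D`. -/
def Vd (k : Type*) [Field k] (n D : ℕ) : Ideal (MvPowerSeries (Fin n) k) where
  carrier := {g | ∀ K, deg K < D → coeff K g = 0}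
  add_mem' := by
    intro a b ha hb K hK
    simp only [map_add, ha K hK, hb K hK, add_zero]
  zero_mem' := by intro K hK; simp
  smul_mem' := by
    intro r g hg K hK
    rw [smul_eq_mul, coeff_mul]
    apply Finset.sum_eq_zero
    intro p hp
    rw [Finset.HasAntidiagonal.mem_antidiagonal] at hp
    have hb : deg p.2 < D := by
      refine lt_of_le_of_lt ?_ hK
      rw [← hp, deg_add]; omega
    rw [hg p.2 hb, mul_zero]

lemma mem_Vd {g : MvPowerSeries (Fin n) k} {D : ℕ} :
    g ∈ Vd k n D ↔ ∀ K, deg K < D → coeff K g = 0 := Iff.rfl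

lemma Vd_antitone {e e' : ℕ} (h : e ≤ e') : Vd k n e' ≤ Vd k n e := by
  intro g hg K hK
  exact hg K (lt_of_lt_of_le hK h)

lemma mul_mem_Vd {e e' : ℕ} {g h : MvPowerSeries (Fin n) k}
    (hg : g ∈ Vd k n e) (hh : h ∈ Vd k n e') : g * h ∈ Vd k n (e + e') := by
  intro K hK
  rw [coeff_mul]
  apply Finset.sum_eq_zero
  intro p hp
  rw [Finset.HasAntidiagonal.mem_antidiagonal] at hp
  have h2 : deg p.1 + deg p.2 < e + e' := by rw [← deg_add, hp]; exact hK
  rcases lt_or_ge (deg p.1) e with h1 | h1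
  · rw [hg p.1 h1, zero_mul]
  · rw [hh p.2 (by omega), mul_zero]

lemma X_pow_mem_Vd (j : Fin n) (D : ℕ) : (X j : MvPowerSeries (Fin n) k) ^ D ∈ Vd k n D := by
  intro K hK
  rw [X_pow_eq, coeff_monomial]
  split_ifs with h
  · subst h; rw [deg_single] at hK; omega
  · rfl


lemma div_step (hn : 0 < n) {M : ℕ} (hM : 1 ≤ M) {e : ℕ} (he : n * M ≤ e)
    {r : MvPowerSeries (Fin n) k} (hr : r ∈ Vd k n e) :
    ∃ a : Fin n → MvPowerSeries (Fin n) k,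
      (∀ i, a i ∈ Vd k n (e - M)) ∧ r = ∑ i, a i * X i ^ M := by
  classical
  rw [mem_Vd] at hr
  set ok : Fin n → (Fin n →₀ ℕ) → Prop := fun i K => M ≤ K i ∧ ∀ j, j < i → K j < M with hok
  set a : Fin n → MvPowerSeries (Fin n) k := fun i => fun K' =>
    if ok i (K' + Finsupp.single i M) then coeff (K' + Finsupp.single i M) r else 0 with ha
  have hMe : M ≤ e := le_trans (Nat.le_mul_of_pos_left M hn) he
  refine ⟨a, ?_, ?_⟩
  · intro i
    rw [mem_Vd]
    intro K' hK'
    rw [coeff_apply, ha]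
    simp only
    split_ifs with h
    · exact hr (K' + Finsupp.single i M) (by rw [deg_add, deg_single]; omega)
    · rfl
  · have term_eq : ∀ K, ∀ i : Fin n, coeff K (a i * X i ^ M) =
        if ok i K then coeff K r else 0 := by
      intro K i
      rw [X_pow_eq, coeff_mul_monomial]
      by_cases hle : Finsupp.single i M ≤ K
      · rw [if_pos hle, coeff_apply, ha]
        simp only
        have hc : (K - Finsupp.single i M) + Finsupp.single i M = K :=
          tsub_add_cancel_of_le hle
        rw [hc, mul_one]
      · rw [if_neg hle, if_neg]
        intro h
        exact hle (Finsupp.single_le_iff.mpr h.1)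
    apply MvPowerSeries.ext
    intro K
    rw [map_sum]
    rw [Finset.sum_congr rfl (fun i _ => term_eq K i)]
    by_cases H : ∃ i, M ≤ K i
    · set s : Finset (Fin n) := Finset.univ.filter (fun i => M ≤ K i) with hs
      have hsne : s.Nonempty := by
        obtain ⟨i, hi⟩ := H
        exact ⟨i, by simp [hs, hi]⟩
      set i₀ := s.min' hsne with hi₀
      have hmem : M ≤ K i₀ := (Finset.mem_filter.mp (s.min'_mem hsne)).2
      have hok₀ : ok i₀ K := by
        refine ⟨hmem, fun j hj => ?_⟩
        by_contra hc
        push_neg at hc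
        exact absurd (s.min'_le j (by simp [hs, hc])) (by omega)
      rw [Finset.sum_eq_single i₀]
      · rw [if_pos hok₀]
      · intro b _ hb
        rw [if_neg]
        intro hokb
        rcases lt_or_gt_of_ne hb with h1 | h1
        · exact absurd hmem (by have := hok₀.2 b h1; omega)
        · exact absurd hmem (by have := hokb.2 i₀ h1; omega)
      · intro h
        exact absurd (Finset.mem_univ i₀) h
    · push_neg at H
      have hzero : coeff K r = 0 := by
        refine hr K ?_
        have hle : deg K ≤ n * (M - 1) := by
          have : ∀ l : Fin n, K l ≤ M - 1 := fun l => by have := H l; omega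
          calc deg K = ∑ l, K l := rfl
            _ ≤ ∑ _l : Fin n, (M - 1) := Finset.sum_le_sum (fun l _ => this l)
            _ = n * (M - 1) := by rw [Finset.sum_const, Finset.card_univ, Fintype.card_fin,
                smul_eq_mul]
        have h3 : n * (M - 1) + n = n * M := by
          have hMM : M - 1 + 1 = M := by omega
          calc n * (M - 1) + n = n * (M - 1 + 1) := by ring
            _ = n * M := by rw [hMM]
        omega
      rw [hzero]
      simp


lemma mem_Vd_zero (g : MvPowerSeries (Fin n) k) : g ∈ Vd k n 0 :=
  mem_Vd.mpr fun _ hK => absurd hK (Nat.not_lt_zero _)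

lemma span_of_approx (hn : 0 < n) {M : ℕ} (hM : 1 ≤ M)
    (h w : Fin n → MvPowerSeries (Fin n) k)
    (hw : ∀ i, w i ∈ Vd k n (n * M + M + 1))
    (hh : ∀ i, h i = X i ^ M + w i)
    {g : MvPowerSeries (Fin n) k} (hg : g ∈ Vd k n (n * M)) :
    g ∈ Ideal.span (Set.range h) := by
  classical
  set pick : MvPowerSeries (Fin n) k → ℕ → Fin n → MvPowerSeries (Fin n) k := fun r s =>
    if hr : r ∈ Vd k n (n * M + s) then
      Classical.choose (div_step hn hM (Nat.le_add_right _ _) hr) else 0 with hpick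
  have pick_mem : ∀ r s i, pick r s i ∈ Vd k n (n * M + s - M) := by
    intro r s i
    rw [hpick]; simp only
    split_ifs with hr
    · exact (Classical.choose_spec (div_step hn hM (Nat.le_add_right _ _) hr)).1 i
    · simp only [Pi.zero_apply]; exact zero_mem _
  have pick_eq : ∀ r s, r ∈ Vd k n (n * M + s) → r = ∑ i, pick r s i * X i ^ M := by
    intro r s hr
    rw [hpick]; simp only [dif_pos hr]
    exact (Classical.choose_spec (div_step hn hM (Nat.le_add_right _ _) hr)).2
  set F : ℕ → MvPowerSeries (Fin n) k := fun s =>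
    Nat.rec (motive := fun _ => MvPowerSeries (Fin n) k) g
      (fun s r => r - ∑ i, pick r s i * h i) s with hF
  have hF0 : F 0 = g := rfl
  have hFsucc : ∀ s, F (s + 1) = F s - ∑ i, pick (F s) s i * h i := fun s => rfl
  have Finv : ∀ s, F s ∈ Vd k n (n * M + s) := by
    intro s; induction s with
    | zero => simpa [hF0] using hg
    | succ s ih =>
      rw [hFsucc]
      have heq := pick_eq (F s) s ih
      have expand : ∑ i, pick (F s) s i * h i
          = (∑ i, pick (F s) s i * X i ^ M) + ∑ i, pick (F s) s i * w i := by
        rw [← Finset.sum_add_distrib]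
        refine Finset.sum_congr rfl fun i _ => ?_
        rw [hh i, mul_add]
      have hrw : F s - ∑ i, pick (F s) s i * h i = - ∑ i, pick (F s) s i * w i := by
        rw [expand, ← heq]; ring
      rw [hrw]
      refine neg_mem (Ideal.sum_mem _ fun i _ => ?_)
      refine Vd_antitone ?_ (mul_mem_Vd (pick_mem (F s) s i) (hw i))
      omega
  have telescope : ∀ S, g - ∑ s ∈ Finset.range S, ∑ i, pick (F s) s i * h i = F S := by
    intro S; induction S with
    | zero => simp [hF0]
    | succ S ih => rw [Finset.sum_range_succ, hFsucc, ← ih]; ring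
  set A : Fin n → MvPowerSeries (Fin n) k := fun i => fun K' =>
    ∑ s ∈ Finset.range (deg K' + M + 1), coeff K' (pick (F s) s i) with hA
  have hA_part : ∀ (i : Fin n) (S : ℕ) (K : Fin n →₀ ℕ), deg K + M + 1 ≤ S →
      coeff K (A i) = coeff K (∑ s ∈ Finset.range S, pick (F s) s i) := by
    intro i S K hS
    rw [map_sum, coeff_apply, hA]
    simp only
    refine Finset.sum_subset (Finset.range_subset_range.mpr (by omega)) ?_
    intro s hs hs'
    rw [Finset.mem_range] at hs hs'
    exact (mem_Vd.mp (pick_mem (F s) s i)) K (by omega)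
  have final : g = ∑ i, A i * h i := by
    apply MvPowerSeries.ext
    intro K
    set S := deg K + M + 1 with hS
    have h1 : coeff K (F S) = 0 := (mem_Vd.mp (Finv S)) K (by omega)
    have h2 := congrArg (coeff K) (telescope S)
    rw [map_sub, h1, sub_eq_zero] at h2
    have h4 : ∑ s ∈ Finset.range S, ∑ i, pick (F s) s i * h i
        = ∑ i, (∑ s ∈ Finset.range S, pick (F s) s i) * h i := by
      rw [Finset.sum_comm]
      exact Finset.sum_congr rfl fun i _ => (Finset.sum_mul _ _ _).symm
    have h5 : ∀ i : Fin n, coeff K ((∑ s ∈ Finset.range S, pick (F s) s i) * h i)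
        = coeff K (A i * h i) := by
      intro i
      have hdiff : A i - (∑ s ∈ Finset.range S, pick (F s) s i) ∈ Vd k n (deg K + 1) := by
        rw [mem_Vd]; intro K' hK'
        rw [map_sub, hA_part i S K' (by omega), sub_self]
      have h0 : coeff K ((A i - ∑ s ∈ Finset.range S, pick (F s) s i) * h i) = 0 := by
        have hmem := Vd_antitone (show deg K + 1 ≤ deg K + 1 + 0 by omega)
          (mul_mem_Vd hdiff (mem_Vd_zero (h i)))
        exact (mem_Vd.mp hmem) K (by omega)
      rw [show A i * h i = (∑ s ∈ Finset.range S, pick (F s) s i) * h i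
          + (A i - ∑ s ∈ Finset.range S, pick (F s) s i) * h i from by ring, map_add, h0,
        add_zero]
    rw [h2, h4, map_sum, map_sum]
    exact Finset.sum_congr rfl fun i _ => h5 i
  rw [final]
  exact Ideal.sum_mem _ fun i _ =>
    Ideal.mul_mem_left _ _ (Ideal.subset_span ⟨i, rfl⟩)


/-- the eigenvalue of the monomial `x^K` under the scaling automorphism -/
def cK (α : Fin n → k) (K : Fin n →₀ ℕ) : k := ∏ i, α i ^ K i

section Scaling

variable (α : Fin n → k) (φ : MvPowerSeries (Fin n) k ≃ₐ[k] MvPowerSeries (Fin n) k)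
  (hφ : ∀ (g : MvPowerSeries (Fin n) k) (K : Fin n →₀ ℕ),
    MvPowerSeries.coeff K (φ g) = (∏ i, α i ^ K i) * MvPowerSeries.coeff K g)
  (I : Ideal (MvPowerSeries (Fin n) k)) (hφI : Ideal.map φ I = I)

include hφ in
lemma coeff_iterate (m : ℕ) (g : MvPowerSeries (Fin n) k) (K : Fin n →₀ ℕ) :
    coeff K (φ^[m] g) = (cK α K) ^ m * coeff K g := by
  induction m with
  | zero => simp
  | succ m ih =>
    rw [Function.iterate_succ_apply', hφ, ih, cK, pow_succ]
    ring

include hφI in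
lemma iterate_mem (m : ℕ) {f : MvPowerSeries (Fin n) k} (hf : f ∈ I) : φ^[m] f ∈ I := by
  induction m with
  | zero => simpa using hf
  | succ m ih =>
    rw [Function.iterate_succ_apply']
    have := Ideal.mem_map_of_mem φ ih
    rwa [hφI] at this

include hφ hφI in
lemma component_approx {f : MvPowerSeries (Fin n) k} (hf : f ∈ I) (Q : k → Prop)
    [DecidablePred Q] (D : ℕ) :
    ∃ h ∈ I, ∀ K, deg K < D →
      coeff K h = if Q (cK α K) then coeff K f else 0 := by
  classical
  set E : Finset k := ((Finset.range D).biUnion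
    (fun e => Finset.finsuppAntidiag Finset.univ e)).image (cK α) with hE
  set P : Polynomial k := Lagrange.interpolate E id (fun c => if Q c then 1 else 0) with hP
  refine ⟨∑ m ∈ Finset.range (P.natDegree + 1), (C (P.coeff m)) * (φ^[m] f),
    Ideal.sum_mem _ (fun m _ => Ideal.mul_mem_left _ _ (iterate_mem φ I hφI m hf)), ?_⟩
  intro K hK
  have hcoeff : coeff K (∑ m ∈ Finset.range (P.natDegree + 1),
      (C (P.coeff m)) * (φ^[m] f)) = P.eval (cK α K) * coeff K f := by
    rw [map_sum, Polynomial.eval_eq_sum_range, Finset.sum_mul]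
    refine Finset.sum_congr rfl fun m _ => ?_
    rw [coeff_C_mul, coeff_iterate α φ hφ m f K]
    ring
  rw [hcoeff]
  have hnode : cK α K ∈ E := by
    rw [hE]
    refine Finset.mem_image.mpr ⟨K, ?_, rfl⟩
    refine Finset.mem_biUnion.mpr ⟨deg K, Finset.mem_range.mpr hK, ?_⟩
    rw [Finset.mem_finsuppAntidiag]
    exact ⟨rfl, Finset.subset_univ _⟩
  have := Lagrange.eval_interpolate_at_node (r := fun c => if Q c then 1 else 0)
    (Function.injective_id.injOn) hnode
  rw [id_eq] at this
  rw [hP, this]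
  by_cases h : Q (cK α K) <;> simp [h]

/-- componentwise cutoff by a predicate on monomial eigenvalues -/
def comp (α : Fin n → k) (Q : k → Prop) [DecidablePred Q] (g : MvPowerSeries (Fin n) k) :
    MvPowerSeries (Fin n) k := fun K => if Q (cK α K) then coeff K g else 0

lemma coeff_comp {α : Fin n → k} {Q : k → Prop} [DecidablePred Q]
    {g : MvPowerSeries (Fin n) k} (K : Fin n →₀ ℕ) :
    coeff K (comp α Q g) = if Q (cK α K) then coeff K g else 0 := rfl

/-- The "closure" of `I`: elements approximable to any order by elements of `I`. -/
noncomputable def Ic (I : Ideal (MvPowerSeries (Fin n) k)) : Ideal (MvPowerSeries (Fin n) k) :=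
  ⨅ D : ℕ, (I ⊔ Vd k n D)

lemma le_Ic : I ≤ Ic I := fun g hg =>
  Submodule.mem_iInf _ |>.mpr fun _ => Submodule.mem_sup_left hg

include hφ hφI in
lemma comp_mem_Ic {g : MvPowerSeries (Fin n) k} (hg : g ∈ Ic I) (Q : k → Prop)
    [DecidablePred Q] : comp α Q g ∈ Ic I := by
  classical
  rw [Ic, Submodule.mem_iInf]
  intro D
  have hgD := (Submodule.mem_iInf _).mp hg D
  obtain ⟨a, haI, b, hbV, hab⟩ := Submodule.mem_sup.mp hgD
  obtain ⟨h, hhI, hhc⟩ := component_approx α φ hφ I hφI haI Q D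
  refine Submodule.mem_sup.mpr ⟨h, hhI, comp α Q g - h, ?_, by ring⟩
  rw [mem_Vd]
  intro K hK
  rw [map_sub, hhc K hK, coeff_comp, ← hab, map_add, mem_Vd.mp hbV K hK, add_zero, sub_self]

end Scaling


lemma prod_zpow_single {G : Type*} [CommGroup G] {n : ℕ} (a : Fin n → G) (i : Fin n) (c : ℤ) :
    ∏ l, a l ^ (Pi.single i c : Fin n → ℤ) l = a i ^ c := by
  rw [Finset.prod_eq_single i]
  · rw [Pi.single_eq_same]
  · intro b _ hb
    rw [Pi.single_eq_of_ne hb, zpow_zero]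
  · intro h; exact absurd (Finset.mem_univ i) h

lemma exists_functional {G : Type*} [CommGroup G] {n : ℕ} (a : Fin n → G) {i j : Fin n}
    (hij : ∀ N : ℕ, 1 ≤ N → a i ^ N ≠ a j ^ N) :
    ∃ m : Fin n → ℤ,
      (∀ u u' : Fin n → ℤ, (∏ l, a l ^ u l) = (∏ l, a l ^ u' l) →
        ∑ l, u l * m l = ∑ l, u' l * m l) ∧ m i ≠ m j := by
  classical
  set L : Submodule ℤ (Fin n → ℤ) :=
    { carrier := {u | ∏ l, a l ^ u l = 1}
      add_mem' := by
        intro u u' hu hu'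
        simp only [Set.mem_setOf_eq] at *
        have : ∀ l, a l ^ (u + u') l = a l ^ u l * a l ^ u' l := by
          intro l; rw [Pi.add_apply, zpow_add]
        rw [Finset.prod_congr rfl fun l _ => this l, Finset.prod_mul_distrib, hu, hu', one_mul]
      zero_mem' := by simp
      smul_mem' := by
        intro c u hu
        simp only [Set.mem_setOf_eq] at *
        have : ∀ l, a l ^ (c • u) l = (zpowGroupHom c (a l ^ u l) : G) := by
          intro l
          simp only [Pi.smul_apply, smul_eq_mul, zpowGroupHom_apply]
          rw [← zpow_mul, mul_comm]
        rw [Finset.prod_congr rfl fun l _ => this l, ← map_prod, hu, map_one] } with hL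
  have memL : ∀ u : Fin n → ℤ, u ∈ L ↔ (∏ l, a l ^ u l) = 1 := fun u => Iff.rfl
  set M := (Fin n → ℤ) ⧸ L with hM
  set Mt := M ⧸ (Submodule.torsion ℤ M) with hMt
  set v₀ : Fin n → ℤ := Pi.single i 1 - Pi.single j 1 with hv₀
  set F0 : (Fin n → ℤ) →ₗ[ℤ] Mt := ((Submodule.torsion ℤ M).mkQ).comp L.mkQ with hF0
  have prod_v : ∀ (c : ℤ), ∏ l, a l ^ (c • v₀) l = a i ^ c * (a j ^ c)⁻¹ := by
    intro c
    have : c • v₀ = (Pi.single i c : Fin n → ℤ) - (Pi.single j c : Fin n → ℤ) := by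
      ext l
      simp only [Pi.smul_apply, Pi.sub_apply, smul_eq_mul, hv₀]
      rcases eq_or_ne l i with rfl | hli <;> rcases eq_or_ne l j with rfl | hlj <;>
        simp_all [Pi.single_apply]
    rw [this]
    have : ∀ l, a l ^ ((Pi.single i c : Fin n → ℤ) - (Pi.single j c : Fin n → ℤ)) l
        = a l ^ (Pi.single i c : Fin n → ℤ) l * (a l ^ (Pi.single j c : Fin n → ℤ) l)⁻¹ := by
      intro l; rw [Pi.sub_apply, zpow_sub]
    rw [Finset.prod_congr rfl fun l _ => this l, Finset.prod_mul_distrib,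
      Finset.prod_inv_distrib, prod_zpow_single, prod_zpow_single]
  have hx : F0 v₀ ≠ 0 := by
    intro h0
    rw [hF0, LinearMap.comp_apply, Submodule.mkQ_apply, Submodule.mkQ_apply,
      Submodule.Quotient.mk_eq_zero] at h0
    obtain ⟨c, hc⟩ := h0
    rw [← Submodule.Quotient.mk_smul, Submodule.Quotient.mk_eq_zero] at hc
    have hcL : ∏ l, a l ^ ((c : ℤ) • v₀) l = 1 := hc
    rw [prod_v] at hcL
    have hcne : (c : ℤ) ≠ 0 := nonZeroDivisors.coe_ne_zero c
    have heq : a i ^ (c : ℤ) = a j ^ (c : ℤ) := by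
      rw [mul_inv_eq_one] at hcL; exact hcL
    have heqN : a i ^ ((c : ℤ).natAbs : ℤ) = a j ^ ((c : ℤ).natAbs : ℤ) := by
      rcases Int.natAbs_eq (c : ℤ) with h | h
      · rw [← h]; exact heq
      · rw [show ((c : ℤ).natAbs : ℤ) = -(c : ℤ) by omega, zpow_neg, zpow_neg, heq]
    rw [zpow_natCast, zpow_natCast] at heqN
    exact hij (c : ℤ).natAbs (by omega) heqN
  have hfree : Module.Free ℤ Mt := Module.free_of_finite_type_torsion_free'
  set B := Module.Free.chooseBasis ℤ Mt with hB
  have hrepr : B.repr (F0 v₀) ≠ 0 := by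
    intro h
    apply hx
    have := congrArg B.repr.symm h
    rwa [LinearEquiv.symm_apply_apply, map_zero] at this
  obtain ⟨b, hb⟩ : ∃ b, B.repr (F0 v₀) b ≠ 0 := by
    by_contra hall
    push_neg at hall
    exact hrepr (Finsupp.ext hall)
  set F : (Fin n → ℤ) →ₗ[ℤ] ℤ := (B.coord b).comp F0 with hF
  have hdec : ∀ u : Fin n → ℤ, u = ∑ l, u l • Pi.single l (1 : ℤ) := by
    intro u
    ext s
    rw [Finset.sum_apply]
    have : ∀ l, (u l • (Pi.single l (1 : ℤ) : Fin n → ℤ)) s = if s = l then u l else 0 := by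
      intro l
      rcases eq_or_ne s l with rfl | h
      · simp
      · simp [Pi.single_eq_of_ne, h, Ne.symm h]
    rw [Finset.sum_congr rfl fun l _ => this l, Finset.sum_ite_eq]
    simp
  have hFsum : ∀ u : Fin n → ℤ, F u = ∑ l, u l * F (Pi.single l 1) := by
    intro u
    conv_lhs => rw [hdec u]
    rw [map_sum]
    exact Finset.sum_congr rfl fun l _ => by rw [map_smul, smul_eq_mul]
  have hFL : ∀ u ∈ L, F u = 0 := by
    intro u hu
    have h0 : L.mkQ u = 0 := by
      rw [Submodule.mkQ_apply, Submodule.Quotient.mk_eq_zero]; exact hu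
    rw [hF, LinearMap.comp_apply, hF0, LinearMap.comp_apply, h0, map_zero, map_zero]
  refine ⟨fun l => F (Pi.single l 1), ?_, ?_⟩
  · intro u u' huu
    have hmem : u - u' ∈ L := by
      rw [memL]
      have : ∀ l, a l ^ (u - u') l = a l ^ u l * (a l ^ u' l)⁻¹ := by
        intro l; rw [Pi.sub_apply, zpow_sub]
      rw [Finset.prod_congr rfl fun l _ => this l, Finset.prod_mul_distrib,
        Finset.prod_inv_distrib, huu, mul_inv_cancel]
    have h0 := hFL _ hmem
    rw [hFsum] at h0
    have : ∀ l, ((u - u') l) * F (Pi.single l 1)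
        = u l * F (Pi.single l 1) - u' l * F (Pi.single l 1) := by
      intro l; rw [Pi.sub_apply, sub_mul]
    rw [Finset.sum_congr rfl fun l _ => this l, Finset.sum_sub_distrib, sub_eq_zero] at h0
    exact h0
  · intro hm
    apply hb
    have : F v₀ = B.repr (F0 v₀) b := by
      rw [hF, LinearMap.comp_apply, Module.Basis.coord_apply]
    rw [← this, hv₀, map_sub, sub_eq_zero]
    exact hm


section NSS

variable [IsAlgClosed k]

lemma exists_nonzero_zero (hn : 0 < n)
    (I : Ideal (MvPowerSeries (Fin n) k)) (hI : I.IsPrime)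
    (hIle : I ≤ Ideal.span (Set.range (MvPowerSeries.X : Fin n → MvPowerSeries (Fin n) k)))
    (hIne : I ≠ Ideal.span (Set.range (MvPowerSeries.X : Fin n → MvPowerSeries (Fin n) k))) :
    ∃ lam : Fin n → k, lam ≠ 0 ∧
      lam ∈ MvPolynomial.zeroLocus k ((Ic I).comap
        (MvPolynomial.coeToMvPowerSeries.ringHom (σ := Fin n) (R := k))) := by
  classical
  set T := MvPolynomial.coeToMvPowerSeries.ringHom (σ := Fin n) (R := k) with hT
  set J := (Ic I).comap T with hJ
  by_cases hsub : MvPolynomial.zeroLocus k J ⊆ {0}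
  · exfalso
    -- each variable is in the radical of J
    have hXrad : ∀ i : Fin n, MvPolynomial.X i ∈ J.radical := by
      intro i
      rw [← MvPolynomial.vanishingIdeal_zeroLocus_eq_radical (K := k)]
      rw [MvPolynomial.mem_vanishingIdeal_iff]
      intro x hx
      have : x = 0 := hsub hx
      rw [this, MvPolynomial.aeval_X]
      rfl
    choose Mi hMi using fun i => (Ideal.mem_radical_iff.mp (hXrad i))
    set M := (Finset.univ.sup Mi) + 1 with hMdef
    have hM1 : 1 ≤ M := by omega
    have hXM : ∀ i : Fin n, (MvPowerSeries.X i : MvPowerSeries (Fin n) k) ^ M ∈ Ic I := by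
      intro i
      have h1 : T (MvPolynomial.X i ^ Mi i) ∈ Ic I := hMi i
      have h2 : T (MvPolynomial.X i ^ Mi i)
          = (MvPowerSeries.X i : MvPowerSeries (Fin n) k) ^ Mi i := by
        rw [map_pow, hT, MvPolynomial.coeToMvPowerSeries.ringHom_apply, MvPolynomial.coe_X]
      rw [h2] at h1
      have h3 : (MvPowerSeries.X i : MvPowerSeries (Fin n) k) ^ M
          = (MvPowerSeries.X i) ^ (M - Mi i) * (MvPowerSeries.X i) ^ (Mi i) := by
        rw [← pow_add]
        congr 1
        have : Mi i ≤ Finset.univ.sup Mi := Finset.le_sup (Finset.mem_univ i)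
        omega
      rw [h3]
      exact Ideal.mul_mem_left _ _ h1
    -- decompose each X i ^ M
    have hdecomp : ∀ i : Fin n, ∃ hi ∈ I, ∃ wi ∈ Vd k n (n * M + M + 1),
        hi = (MvPowerSeries.X i : MvPowerSeries (Fin n) k) ^ M + wi := by
      intro i
      have := (Submodule.mem_iInf _).mp (hXM i) (n * M + M + 1)
      obtain ⟨a, haI, b, hbV, hab⟩ := Submodule.mem_sup.mp this
      exact ⟨a, haI, -b, neg_mem hbV, by rw [← hab]; ring⟩
    choose hfun hfunI wfun hwV hsum using hdecomp
    have hspan : Ideal.span (Set.range hfun) ≤ I := by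
      rw [Ideal.span_le]
      rintro _ ⟨i, rfl⟩
      exact hfunI i
    have hXnM : ∀ j : Fin n, (MvPowerSeries.X j : MvPowerSeries (Fin n) k) ^ (n * M) ∈ I := by
      intro j
      refine hspan (span_of_approx hn hM1 hfun wfun hwV hsum (X_pow_mem_Vd j (n * M)))
    have hXmem : ∀ j : Fin n, (MvPowerSeries.X j : MvPowerSeries (Fin n) k) ∈ I := by
      intro j
      exact (hI.pow_mem_iff_mem (n * M) (by positivity)).mp (hXnM j)
    apply hIne
    refine le_antisymm hIle ?_
    rw [Ideal.span_le]
    rintro _ ⟨j, rfl⟩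
    exact hXmem j
  · obtain ⟨lam, hmem, hne⟩ := Set.not_subset.mp hsub
    exact ⟨lam, by simpa using hne, hmem⟩

end NSS


end Stmt18aux

/-- The continuous `k`-algebra substitution homomorphism `k[[x₁,…,xₙ]] → k[[x]]`,
`xᵢ ↦ λᵢ·x`: the coefficient of `x^d` in `f(λ₁x,…,λₙx)` is
`Σ_{|K| = d} f_K·∏ᵢ λᵢ^{Kᵢ}`. -/
noncomputable def lineSubst {k : Type*} [CommSemiring k] {n : ℕ} (lam : Fin n → k)
    (f : MvPowerSeries (Fin n) k) : PowerSeries k :=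
  PowerSeries.mk fun d => ∑ K ∈ Finset.finsuppAntidiag (Finset.univ : Finset (Fin n)) d,
    MvPowerSeries.coeff K f * ∏ i, lam i ^ K i

/-- Let `k` be an algebraically closed field with an absolute value `v`, `t > 1`, and
`α₁,…,αₙ ∈ k` with `v(αᵢ) = t`.  Let `φ` be the scaling automorphism of `k[[x₁,…,xₙ]]`
with `φ(xᵢ) = αᵢ·xᵢ`, and let `I` be a prime ideal with `φ(I) = I`, contained in but not
equal to the maximal ideal `m = (x₁,…,xₙ)`.  Then there are `λ₁,…,λₙ ∈ k`, not all zero,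
with `I` contained in the kernel of the substitution homomorphism `xᵢ ↦ λᵢ·x` into
`k[[x]]`; moreover there is `N ≥ 1` with `αᵢ^N = αⱼ^N` whenever `λᵢ ≠ 0 ≠ λⱼ`. -/
theorem stmt18 {k : Type*} [Field k] [IsAlgClosed k] (v : AbsoluteValue k ℝ)
    (t : ℝ) (ht : 1 < t) (n : ℕ) (α : Fin n → k) (hα : ∀ i, v (α i) = t)
    (φ : MvPowerSeries (Fin n) k ≃ₐ[k] MvPowerSeries (Fin n) k)
    (hφ : ∀ (g : MvPowerSeries (Fin n) k) (K : Fin n →₀ ℕ),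
      MvPowerSeries.coeff K (φ g) = (∏ i, α i ^ K i) * MvPowerSeries.coeff K g)
    (I : Ideal (MvPowerSeries (Fin n) k)) (hI : I.IsPrime) (hφI : Ideal.map φ I = I)
    (hIle : I ≤ Ideal.span (Set.range (MvPowerSeries.X : Fin n → MvPowerSeries (Fin n) k)))
    (hIne : I ≠ Ideal.span (Set.range (MvPowerSeries.X : Fin n → MvPowerSeries (Fin n) k))) :
    ∃ lam : Fin n → k, lam ≠ 0 ∧
      (∀ f ∈ I, lineSubst lam f = 0) ∧
      ∃ N : ℕ, 1 ≤ N ∧ ∀ i j, lam i ≠ 0 → lam j ≠ 0 → α i ^ N = α j ^ N := by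
  classical
  rcases Nat.eq_zero_or_pos n with hn0 | hn
  · exfalso
    subst hn0
    have hX : (Set.range (MvPowerSeries.X : Fin 0 → MvPowerSeries (Fin 0) k)) = ∅ :=
      Set.range_eq_empty _
    rw [hX, Ideal.span_empty] at hIle hIne
    exact hIne (le_bot_iff.mp hIle)
  have hα0 : ∀ l, α l ≠ 0 := by
    intro l h
    have h1 := hα l
    rw [h, map_zero] at h1
    linarith
  have hvcK : ∀ K : Fin n →₀ ℕ, v (Stmt18aux.cK α K) = t ^ Stmt18aux.deg K := by
    intro K
    rw [Stmt18aux.cK, map_prod,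
      Finset.prod_congr rfl fun i (_ : i ∈ Finset.univ) => by rw [v.map_pow, hα i],
      Finset.prod_pow_eq_pow_sum]
    rfl
  have htinj : ∀ d d' : ℕ, (t : ℝ) ^ d = t ^ d' → d = d' := by
    intro d d' h
    by_contra hne
    rcases Nat.lt_or_ge d d' with h1 | h1
    · exact absurd h (ne_of_lt (pow_lt_pow_right₀ ht h1))
    · exact absurd h.symm (ne_of_lt (pow_lt_pow_right₀ ht (by omega)))
  have hmem_ad : ∀ (d : ℕ) (K : Fin n →₀ ℕ),
      K ∈ Finset.finsuppAntidiag (Finset.univ : Finset (Fin n)) d ↔ Stmt18aux.deg K = d := by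
    intro d K
    rw [Finset.mem_finsuppAntidiag]
    exact ⟨fun h => h.1, fun h => ⟨h, Finset.subset_univ _⟩⟩
  set T := MvPolynomial.coeToMvPowerSeries.ringHom (σ := Fin n) (R := k) with hT
  set J := (Stmt18aux.Ic I).comap T with hJ
  set pol : MvPowerSeries (Fin n) k → ℕ → MvPolynomial (Fin n) k := fun g d =>
    ∑ K ∈ Finset.finsuppAntidiag (Finset.univ : Finset (Fin n)) d,
      MvPolynomial.monomial K (MvPowerSeries.coeff K g) with hpol
  have hTpol : ∀ g d, T (pol g d) = Stmt18aux.comp α (fun c => v c = t ^ d) g := by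
    intro g d
    apply MvPowerSeries.ext
    intro K'
    rw [hT, MvPolynomial.coeToMvPowerSeries.ringHom_apply, MvPolynomial.coeff_coe,
      Stmt18aux.coeff_comp, hpol]
    simp only
    rw [MvPolynomial.coeff_sum,
      Finset.sum_congr rfl fun K (_ : K ∈ _) => MvPolynomial.coeff_monomial K' K _,
      Finset.sum_ite_eq' _ K' (fun K => MvPowerSeries.coeff K g)]
    refine if_congr ?_ rfl rfl
    rw [hmem_ad]
    constructor
    · intro h; rw [← h, hvcK]
    · intro h; exact htinj _ _ (by rw [← hvcK K', h])
  have hpolJ : ∀ g ∈ Stmt18aux.Ic I, ∀ d, pol g d ∈ J := by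
    intro g hg d
    rw [hJ, Ideal.mem_comap, hTpol]
    exact Stmt18aux.comp_mem_Ic α φ hφ I hφI hg _
  have heval : ∀ (lam : Fin n → k) (g : MvPowerSeries (Fin n) k) (d : ℕ),
      MvPolynomial.eval lam (pol g d)
      = ∑ K ∈ Finset.finsuppAntidiag (Finset.univ : Finset (Fin n)) d,
        MvPowerSeries.coeff K g * ∏ i, lam i ^ K i := by
    intro lam g d
    rw [hpol]
    simp only
    rw [map_sum]
    refine Finset.sum_congr rfl fun K _ => ?_
    rw [MvPolynomial.eval_monomial, Finsupp.prod_pow]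
  set Zp : (Fin n → k) → Prop := fun lam =>
    ∀ g ∈ Stmt18aux.Ic I, ∀ d : ℕ,
      ∑ K ∈ Finset.finsuppAntidiag (Finset.univ : Finset (Fin n)) d,
        MvPowerSeries.coeff K g * ∏ i, lam i ^ K i = 0 with hZp
  obtain ⟨lam₀, hlam₀ne, hlam₀⟩ := Stmt18aux.exists_nonzero_zero hn I hI hIle hIne
  have hlam₀Z : Zp lam₀ := by
    intro g hg d
    have := (MvPolynomial.mem_zeroLocus_iff).mp hlam₀ _ (hpolJ g hg d)
    rw [← heval]; exact this
  set suppC : (Fin n → k) → ℕ := fun lam => (Finset.univ.filter (fun l => lam l ≠ 0)).card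
    with hsuppC
  have hex : ∃ s : ℕ, ∃ lam, (lam ≠ 0 ∧ Zp lam) ∧ suppC lam = s :=
    ⟨_, lam₀, ⟨hlam₀ne, hlam₀Z⟩, rfl⟩
  obtain ⟨lam, ⟨hlamne, hlamZ⟩, hlamcard⟩ := Nat.find_spec hex
  have hmin : ∀ lam', lam' ≠ 0 → Zp lam' → Nat.find hex ≤ suppC lam' :=
    fun lam' h1 h2 => Nat.find_min' hex ⟨lam', ⟨h1, h2⟩, rfl⟩
  have hpair : ∀ i j, lam i ≠ 0 → lam j ≠ 0 → ∃ N, 1 ≤ N ∧ α i ^ N = α j ^ N := by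
    intro i j hi hj
    by_contra hc
    push_neg at hc
    set a : Fin n → kˣ := fun l => Units.mk0 (α l) (hα0 l) with ha
    have hija : ∀ N : ℕ, 1 ≤ N → a i ^ N ≠ a j ^ N := by
      intro N hN h
      apply hc N hN
      have := congrArg (Units.val) h
      rwa [Units.val_pow_eq_pow_val, Units.val_pow_eq_pow_val] at this
    obtain ⟨m, hm, hmij⟩ := Stmt18aux.exists_functional a hija
    have hval : ∀ u : Fin n → ℤ, ((∏ l, a l ^ u l : kˣ) : k) = ∏ l, (α l) ^ (u l) := by
      intro u
      calc ((∏ l, a l ^ u l : kˣ) : k) = ∏ l, ((a l ^ u l : kˣ) : k) := by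
            rw [← Units.coeHom_apply, map_prod]
            rfl
        _ = ∏ l, (α l) ^ (u l) := Finset.prod_congr rfl fun l _ => by
            rw [Units.val_zpow_eq_zpow_val, ha]
            simp only [Units.val_mk0]
    have hvalK : ∀ K : Fin n →₀ ℕ,
        ((∏ l, a l ^ ((K l : ℤ)) : kˣ) : k) = Stmt18aux.cK α K := by
      intro K
      rw [hval, Stmt18aux.cK]
      exact Finset.prod_congr rfl fun l _ => zpow_natCast (α l) (K l)
    set ψ : k → ℤ := fun c =>
      if h : ∃ u : Fin n → ℤ, ((∏ l, a l ^ u l : kˣ) : k) = c then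
        ∑ l, (h.choose l) * m l else 0 with hψdef
    have hψ : ∀ K : Fin n →₀ ℕ, ψ (Stmt18aux.cK α K) = ∑ l, (K l : ℤ) * m l := by
      intro K
      have hex2 : ∃ u : Fin n → ℤ, ((∏ l, a l ^ u l : kˣ) : k) = Stmt18aux.cK α K :=
        ⟨fun l => (K l : ℤ), hvalK K⟩
      rw [hψdef]
      simp only
      rw [dif_pos hex2]
      refine hm _ _ (Units.ext ?_)
      rw [hex2.choose_spec, hvalK K]
    set s := Finset.univ.filter (fun l => lam l ≠ 0) with hs
    have hsne : s.Nonempty := ⟨i, by simp [hs, hi]⟩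
    set μ := (s.image m).min' (hsne.image m) with hμ
    set lam' : Fin n → k := fun l => if m l = μ then lam l else 0 with hlam'
    have hμ_le : ∀ l, lam l ≠ 0 → μ ≤ m l := by
      intro l hl
      exact Finset.min'_le _ _ (Finset.mem_image.mpr ⟨l, by simp [hs, hl], rfl⟩)
    obtain ⟨l₀, hl₀s, hml₀⟩ := Finset.mem_image.mp ((s.image m).min'_mem (hsne.image m))
    have hl₀ : lam l₀ ≠ 0 := (Finset.mem_filter.mp hl₀s).2
    have hlam'l₀ : lam' l₀ = lam l₀ := by rw [hlam']; simp [hml₀, hμ]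
    have hlam'ne : lam' ≠ 0 := by
      intro h0
      apply hl₀
      rw [← hlam'l₀, h0]
      rfl
    have hlam'sub : ∀ l, lam' l ≠ 0 → lam l ≠ 0 ∧ m l = μ := by
      intro l h
      rw [hlam'] at h
      simp only at h
      by_cases hc2 : m l = μ
      · exact ⟨by rwa [if_pos hc2] at h, hc2⟩
      · rw [if_neg hc2] at h; exact absurd rfl h
    have hlam'Z : Zp lam' := by
      intro g hg d
      set Q : k → Prop := fun c => v c = t ^ d ∧ ψ c = μ * (d : ℤ) with hQ
      have h1 := hlamZ _ (Stmt18aux.comp_mem_Ic α φ hφ I hφI hg Q) d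
      rw [← h1]
      refine Finset.sum_congr rfl fun K hK => ?_
      rw [Stmt18aux.coeff_comp]
      have hdK : Stmt18aux.deg K = d := (hmem_ad d K).mp hK
      have hvK : v (Stmt18aux.cK α K) = t ^ d := by rw [hvcK, hdK]
      have hdsum : (∑ l, (K l : ℤ)) = (d : ℤ) := by
        rw [← Nat.cast_sum]
        exact Nat.cast_inj.mpr hdK
      by_cases hQm : ψ (Stmt18aux.cK α K) = μ * (d : ℤ)
      · rw [if_pos (show Q (Stmt18aux.cK α K) from ⟨hvK, hQm⟩)]
        by_cases hz : (∏ i', lam i' ^ K i') = 0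
        · obtain ⟨l, _, hl⟩ := Finset.prod_eq_zero_iff.mp hz
          have hKl : K l ≠ 0 := by
            intro h
            rw [h, pow_zero] at hl
            exact one_ne_zero hl
          have hlaml : lam l = 0 := by
            have := pow_eq_zero_iff hKl |>.mp hl
            exact this
          have hlam'l : lam' l = 0 := by
            rw [hlam']
            simp only
            split_ifs
            · exact hlaml
            · rfl
          have hz' : (∏ i', lam' i' ^ K i') = 0 :=
            Finset.prod_eq_zero (Finset.mem_univ l) (by rw [hlam'l]; exact zero_pow hKl)
          rw [hz', hz]
        · have hall : ∀ l, K l ≠ 0 → lam l ≠ 0 := by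
            intro l hKl hlaml
            exact hz (Finset.prod_eq_zero (Finset.mem_univ l)
              (by rw [hlaml]; exact zero_pow hKl))
          have hs1 : ∑ l, (K l : ℤ) * m l = μ * (d : ℤ) := by rw [← hψ K]; exact hQm
          have hsum0 : ∑ l, (K l : ℤ) * (m l - μ) = 0 := by
            rw [Finset.sum_congr rfl fun l (_ : l ∈ Finset.univ) =>
              (show (K l : ℤ) * (m l - μ) = (K l : ℤ) * m l - (K l : ℤ) * μ from by ring),
              Finset.sum_sub_distrib, hs1, ← Finset.sum_mul, hdsum]
            ring
          have hnn : ∀ l ∈ Finset.univ, (0 : ℤ) ≤ (K l : ℤ) * (m l - μ) := by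
            intro l _
            rcases eq_or_ne (K l) 0 with h | h
            · rw [h]; simp
            · have h2 := hμ_le l (hall l h)
              have h3 : (0 : ℤ) ≤ (K l : ℤ) := Int.natCast_nonneg _
              have h4 : (0 : ℤ) ≤ m l - μ := by omega
              exact mul_nonneg h3 h4
          have hterm := (Finset.sum_eq_zero_iff_of_nonneg hnn).mp hsum0
          have hprod : ∏ i', lam' i' ^ K i' = ∏ i', lam i' ^ K i' := by
            refine Finset.prod_congr rfl fun l _ => ?_
            rcases eq_or_ne (K l) 0 with h | h
            · rw [h, pow_zero, pow_zero]
            · have h5 := hterm l (Finset.mem_univ l)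
              have h6 : (K l : ℤ) ≠ 0 := by exact_mod_cast h
              have h7 : m l - μ = 0 := by
                rcases mul_eq_zero.mp h5 with h8 | h8
                · exact absurd h8 h6
                · exact h8
              have h8 : m l = μ := by omega
              rw [hlam']
              simp only
              rw [if_pos h8]
          rw [hprod]
      · rw [if_neg (fun hQQ => hQm hQQ.2), zero_mul]
        by_cases hz : (∏ i', lam' i' ^ K i') = 0
        · rw [hz, mul_zero]
        · exfalso
          apply hQm
          have hall : ∀ l, K l ≠ 0 → m l = μ := by
            intro l hKl
            have hne : lam' l ≠ 0 := by
              intro h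
              exact hz (Finset.prod_eq_zero (Finset.mem_univ l)
                (by rw [h]; exact zero_pow hKl))
            exact (hlam'sub l hne).2
          rw [hψ K]
          calc ∑ l, (K l : ℤ) * m l = ∑ l, (K l : ℤ) * μ := by
                refine Finset.sum_congr rfl fun l _ => ?_
                rcases eq_or_ne (K l) 0 with h | h
                · rw [h]; simp
                · rw [hall l h]
            _ = (∑ l, (K l : ℤ)) * μ := by rw [Finset.sum_mul]
            _ = μ * (d : ℤ) := by rw [hdsum]; ring
    have hsubset : Finset.univ.filter (fun l => lam' l ≠ 0)
        ⊆ Finset.univ.filter (fun l => lam l ≠ 0) := by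
      intro l hl
      rw [Finset.mem_filter] at hl ⊢
      exact ⟨hl.1, (hlam'sub l hl.2).1⟩
    have hss : suppC lam' < suppC lam := by
      rw [hsuppC]
      simp only
      apply Finset.card_lt_card
      rw [Finset.ssubset_iff_of_subset hsubset]
      rcases eq_or_ne (m i) μ with hmi | hmi
      · have hmj : m j ≠ μ := fun h => hmij (by rw [hmi, h])
        refine ⟨j, by simp [hj], ?_⟩
        simp only [Finset.mem_filter, Finset.mem_univ, true_and, not_not]
        rw [hlam']
        simp only
        rw [if_neg hmj]
      · refine ⟨i, by simp [hi], ?_⟩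
        simp only [Finset.mem_filter, Finset.mem_univ, true_and, not_not]
        rw [hlam']
        simp only
        rw [if_neg hmi]
    have := hmin lam' hlam'ne hlam'Z
    omega
  refine ⟨lam, hlamne, ?_, ?_⟩
  · intro f hf
    apply PowerSeries.ext
    intro d
    rw [map_zero]
    rw [show lineSubst lam f = PowerSeries.mk fun d =>
      ∑ K ∈ Finset.finsuppAntidiag (Finset.univ : Finset (Fin n)) d,
        MvPowerSeries.coeff K f * ∏ i, lam i ^ K i from rfl, PowerSeries.coeff_mk]
    exact hlamZ f (Stmt18aux.le_Ic I hf) d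
  · obtain ⟨j₀, hj₀⟩ := Function.ne_iff.mp hlamne
    have hj₀' : lam j₀ ≠ 0 := hj₀
    set Nf : Fin n → ℕ := fun i => if h : lam i ≠ 0 then (hpair i j₀ h hj₀').choose else 1
      with hNf
    have hNf1 : ∀ i, 1 ≤ Nf i := by
      intro i
      rw [hNf]
      simp only
      split_ifs with h
      · exact (hpair i j₀ h hj₀').choose_spec.1
      · exact le_refl 1
    have hNfeq : ∀ i, lam i ≠ 0 → α i ^ Nf i = α j₀ ^ Nf i := by
      intro i h
      rw [hNf]
      simp only [dif_pos h]
      exact (hpair i j₀ h hj₀').choose_spec.2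
    refine ⟨∏ i, Nf i, Finset.one_le_prod' (fun i _ => hNf1 i), ?_⟩
    have key : ∀ i, lam i ≠ 0 → α i ^ (∏ i', Nf i') = α j₀ ^ (∏ i', Nf i') := by
      intro i h
      have hfac : Nf i * (∏ i' ∈ Finset.univ.erase i, Nf i') = ∏ i', Nf i' :=
        Finset.mul_prod_erase Finset.univ Nf (Finset.mem_univ i)
      rw [← hfac, pow_mul, pow_mul, hNfeq i h]
    intro i j hi hj
    rw [key i hi, key j hj]
end
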